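/- arXiv:2102.04947 — 9 statements merged into one kernel-verified Lean document; each statement's English description precedes it below -/
import Mathlib

section
/- The derivative of the complete elliptic integral of the first kind satisfies dK/dk = E(k)/(k(1-k²)) - K(k)/k for all 0 < k < 1. -/
open Real MeasureTheory Set Filter

noncomputable def Kel (k : ℝ) : ℝ :=
  ∫ θ in (0:ℝ)..(π/2), 1 / Real.sqrt (1 - k^2 * Real.sin θ ^ 2)

noncomputable def Eel (k : ℝ) : ℝ :=
  ∫ θ in (0:ℝ)..(π/2), Real.sqrt (1 - k^2 * Real.sin θ ^ 2)

lemma hasDerivAt_F {x s : ℝ} (hu : 0 < 1 - x^2 * s^2) :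
    HasDerivAt (fun y : ℝ => 1 / Real.sqrt (1 - y^2 * s^2))
      (x * s^2 / ((1 - x^2*s^2) * Real.sqrt (1 - x^2*s^2))) x := by
  have hu' : HasDerivAt (fun y : ℝ => 1 - y^2 * s^2) (-(2*x*s^2)) x := by
    simpa using (((hasDerivAt_pow 2 x).mul_const (s^2)).const_sub 1)
  have hs : HasDerivAt (fun y : ℝ => Real.sqrt (1 - y^2 * s^2))
      (1 / (2 * Real.sqrt (1 - x^2*s^2)) * (-(2*x*s^2))) x :=
    (Real.hasDerivAt_sqrt (ne_of_gt hu)).comp x hu'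
  have hR0 : Real.sqrt (1 - x^2*s^2) ≠ 0 := ne_of_gt (Real.sqrt_pos.mpr hu)
  have h := (hasDerivAt_const x (1:ℝ)).div hs hR0
  refine h.congr_deriv (Eq.symm ?_)
  have hsq : Real.sqrt (1 - x^2*s^2) ^ 2 = 1 - x^2*s^2 := Real.sq_sqrt hu.le
  set R := Real.sqrt (1 - x^2*s^2) with hRdef
  rw [← hsq]
  field_simp
  ring

lemma hasDerivAt_g {k : ℝ} (hk : k^2 < 1) (θ : ℝ) :
    HasDerivAt (fun θ : ℝ => Real.sin θ * Real.cos θ / Real.sqrt (1 - k^2 * Real.sin θ ^ 2))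
      (((Real.cos θ^2 - Real.sin θ^2) * (1 - k^2 * Real.sin θ ^ 2)
          + k^2 * Real.sin θ^2 * Real.cos θ^2)
        / ((1 - k^2 * Real.sin θ ^ 2) * Real.sqrt (1 - k^2 * Real.sin θ ^ 2))) θ := by
  have hu : 0 < 1 - k^2 * Real.sin θ ^ 2 := by
    nlinarith [Real.sin_sq_le_one θ, sq_nonneg k, sq_nonneg (Real.sin θ)]
  have h1 : HasDerivAt (fun θ : ℝ => Real.sin θ * Real.cos θ)
      (Real.cos θ * Real.cos θ + Real.sin θ * (-Real.sin θ)) θ :=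
    (Real.hasDerivAt_sin θ).mul (Real.hasDerivAt_cos θ)
  have hu' : HasDerivAt (fun θ : ℝ => 1 - k^2 * Real.sin θ ^ 2)
      (-(k^2 * (2 * Real.sin θ ^ 1 * Real.cos θ))) θ := by
    simpa using ((((Real.hasDerivAt_sin θ).pow 2).const_mul (k^2)).const_sub 1)
  have h2 : HasDerivAt (fun θ : ℝ => Real.sqrt (1 - k^2 * Real.sin θ ^ 2))
      (1 / (2 * Real.sqrt (1 - k^2 * Real.sin θ ^ 2)) *
        (-(k^2 * (2 * Real.sin θ ^ 1 * Real.cos θ)))) θ :=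
    (Real.hasDerivAt_sqrt (ne_of_gt hu)).comp θ hu'
  have hR0 : Real.sqrt (1 - k^2 * Real.sin θ ^ 2) ≠ 0 := ne_of_gt (Real.sqrt_pos.mpr hu)
  have h := h1.div h2 hR0
  refine h.congr_deriv (Eq.symm ?_)
  have hsq : Real.sqrt (1 - k^2 * Real.sin θ ^ 2) ^ 2 = 1 - k^2 * Real.sin θ ^ 2 :=
    Real.sq_sqrt hu.le
  set R := Real.sqrt (1 - k^2 * Real.sin θ ^ 2) with hRdef
  rw [← hsq]
  field_simp
  ring

lemma pt_identity {k s c R : ℝ} (hk0 : 0 < k) (hk1 : k < 1) (hpyth : s^2 + c^2 = 1)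
    (hR : R^2 = 1 - k^2 * s^2) (hRpos : 0 < R) :
    k * s^2 / ((1 - k^2*s^2) * R)
      = (1/(k*(1-k^2))) * R - (1/k) * (1/R)
        - (k/(1-k^2)) * (((c^2 - s^2) * (1 - k^2*s^2) + k^2*s^2*c^2) / ((1 - k^2*s^2)*R)) := by
  have hk' : (1:ℝ) - k^2 ≠ 0 := by nlinarith
  have hkne : k ≠ 0 := ne_of_gt hk0
  have hs2 : s^2 = (1 - R^2)/k^2 := by rw [hR]; field_simp; ring
  have hc2 : c^2 = 1 - (1 - R^2)/k^2 := by rw [← hs2]; linarith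
  rw [hs2, hc2]
  have hRne : R ≠ 0 := ne_of_gt hRpos
  field_simp
  ring

lemma u_pos' {k : ℝ} (hk : k^2 < 1) (θ : ℝ) : 0 < 1 - k^2 * Real.sin θ ^ 2 := by
  nlinarith [Real.sin_sq_le_one θ, sq_nonneg k, sq_nonneg (Real.sin θ)]

lemma cont_sqrtu (k : ℝ) : Continuous (fun θ : ℝ => Real.sqrt (1 - k^2 * Real.sin θ ^ 2)) := by
  fun_prop

lemma cont_inv_sqrtu {k : ℝ} (hk : k^2 < 1) :
    Continuous (fun θ : ℝ => 1 / Real.sqrt (1 - k^2 * Real.sin θ ^ 2)) :=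
  continuous_const.div (cont_sqrtu k)
    (fun θ => ne_of_gt (Real.sqrt_pos.mpr (u_pos' hk θ)))

lemma cont_gd {k : ℝ} (hk : k^2 < 1) :
    Continuous (fun θ : ℝ => ((Real.cos θ^2 - Real.sin θ^2) * (1 - k^2 * Real.sin θ ^ 2)
          + k^2 * Real.sin θ^2 * Real.cos θ^2)
        / ((1 - k^2 * Real.sin θ ^ 2) * Real.sqrt (1 - k^2 * Real.sin θ ^ 2))) := by
  apply Continuous.div (by fun_prop) (by fun_prop)
  intro θ
  exact ne_of_gt (mul_pos (u_pos' hk θ) (Real.sqrt_pos.mpr (u_pos' hk θ)))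

lemma cont_F' {k : ℝ} (hk : k^2 < 1) :
    Continuous (fun θ : ℝ => k * Real.sin θ^2
        / ((1 - k^2 * Real.sin θ ^ 2) * Real.sqrt (1 - k^2 * Real.sin θ ^ 2))) := by
  apply Continuous.div (by fun_prop) (by fun_prop)
  intro θ
  exact ne_of_gt (mul_pos (u_pos' hk θ) (Real.sqrt_pos.mpr (u_pos' hk θ)))

lemma integral_identity {k : ℝ} (hk0 : 0 < k) (hk1 : k < 1) :
    (∫ θ in (0:ℝ)..(π/2), k * Real.sin θ^2
        / ((1 - k^2 * Real.sin θ ^ 2) * Real.sqrt (1 - k^2 * Real.sin θ ^ 2)))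
      = Eel k / (k * (1 - k^2)) - Kel k / k := by
  have hk : k^2 < 1 := by nlinarith
  have hu := u_pos' hk
  -- the boundary term vanishes
  have hgd_int : IntervalIntegrable (fun θ : ℝ => ((Real.cos θ^2 - Real.sin θ^2) * (1 - k^2 * Real.sin θ ^ 2)
          + k^2 * Real.sin θ^2 * Real.cos θ^2)
        / ((1 - k^2 * Real.sin θ ^ 2) * Real.sqrt (1 - k^2 * Real.sin θ ^ 2))) volume 0 (π/2) :=
    (cont_gd hk).intervalIntegrable _ _
  have hint0 : (∫ θ in (0:ℝ)..(π/2), ((Real.cos θ^2 - Real.sin θ^2) * (1 - k^2 * Real.sin θ ^ 2)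
          + k^2 * Real.sin θ^2 * Real.cos θ^2)
        / ((1 - k^2 * Real.sin θ ^ 2) * Real.sqrt (1 - k^2 * Real.sin θ ^ 2))) = 0 := by
    rw [intervalIntegral.integral_eq_sub_of_hasDerivAt (fun θ _ => hasDerivAt_g hk θ) hgd_int]
    simp
  have heq : ∀ θ ∈ uIcc (0:ℝ) (π/2),
      k * Real.sin θ^2 / ((1 - k^2 * Real.sin θ ^ 2) * Real.sqrt (1 - k^2 * Real.sin θ ^ 2))
        = (1/(k*(1-k^2))) * Real.sqrt (1 - k^2 * Real.sin θ ^ 2)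
          - (1/k) * (1 / Real.sqrt (1 - k^2 * Real.sin θ ^ 2))
          - (k/(1-k^2)) * (((Real.cos θ^2 - Real.sin θ^2) * (1 - k^2 * Real.sin θ ^ 2)
              + k^2 * Real.sin θ^2 * Real.cos θ^2)
            / ((1 - k^2 * Real.sin θ ^ 2) * Real.sqrt (1 - k^2 * Real.sin θ ^ 2))) := by
    intro θ _
    exact pt_identity hk0 hk1 (Real.sin_sq_add_cos_sq θ)
      (Real.sq_sqrt (hu θ).le) (Real.sqrt_pos.mpr (hu θ))
  rw [intervalIntegral.integral_congr heq]
  erw [intervalIntegral.integral_sub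
        ((continuous_const.mul (cont_sqrtu k)).intervalIntegrable _ _ |>.sub
          ((continuous_const.mul (cont_inv_sqrtu hk)).intervalIntegrable _ _))
        ((continuous_const.mul (cont_gd hk)).intervalIntegrable _ _),
      intervalIntegral.integral_sub
        ((continuous_const.mul (cont_sqrtu k)).intervalIntegrable _ _)
        ((continuous_const.mul (cont_inv_sqrtu hk)).intervalIntegrable _ _)]
  simp only [Pi.mul_apply]
  rw [intervalIntegral.integral_const_mul, intervalIntegral.integral_const_mul,
      intervalIntegral.integral_const_mul, hint0]
  rw [show (∫ θ in (0:ℝ)..(π/2), Real.sqrt (1 - k^2 * Real.sin θ ^ 2)) = Eel k from rfl,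
      show (∫ θ in (0:ℝ)..(π/2), 1 / Real.sqrt (1 - k^2 * Real.sin θ ^ 2)) = Kel k from rfl]
  ring

theorem deriv_K (k : ℝ) (hk0 : 0 < k) (hk1 : k < 1) :
    HasDerivAt Kel (Eel k / (k * (1 - k^2)) - Kel k / k) k := by
  have hk : k^2 < 1 := by nlinarith
  set ε : ℝ := min k (1 - k) / 2 with hε
  have hε_pos : 0 < ε := by
    have := lt_min hk0 (by linarith : (0:ℝ) < 1 - k)
    positivity
  set b : ℝ := (1 + k) / 2 with hb
  have hb1 : b < 1 := by rw [hb]; linarith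
  have hb0 : 0 < b := by rw [hb]; linarith
  have hball : ∀ x ∈ Metric.ball k ε, 0 < x ∧ x ≤ b := by
    intro x hx
    rw [Metric.mem_ball, Real.dist_eq, abs_lt] at hx
    constructor
    · have h1 : ε ≤ k / 2 := by
        rw [hε]; have := min_le_left k (1-k); linarith
      linarith
    · have h2 : ε ≤ (1 - k) / 2 := by
        rw [hε]; have := min_le_right k (1-k); linarith
      rw [hb]; linarith
  have hub : 0 < 1 - b^2 := by nlinarith
  -- the bound
  set M : ℝ := b / ((1 - b^2) * Real.sqrt (1 - b^2)) with hM
  have main := intervalIntegral.hasDerivAt_integral_of_dominated_loc_of_deriv_le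
    (F := fun x θ => 1 / Real.sqrt (1 - x^2 * Real.sin θ ^ 2))
    (F' := fun x θ => x * Real.sin θ^2
        / ((1 - x^2 * Real.sin θ ^ 2) * Real.sqrt (1 - x^2 * Real.sin θ ^ 2)))
    (x₀ := k) (a := 0) (b := π/2) (bound := fun _ => M) (μ := volume) (s := Metric.ball k ε) (Metric.ball_mem_nhds k hε_pos)
    (Filter.Eventually.of_forall (fun x => by
      apply Measurable.aestronglyMeasurable
      apply Measurable.div measurable_const
      fun_prop))
    ((cont_inv_sqrtu hk).intervalIntegrable _ _)
    ((cont_F' hk).aestronglyMeasurable.restrict)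
    (Filter.Eventually.of_forall (fun θ _ x hx => by
      obtain ⟨hx0, hxb⟩ := hball x hx
      have hx2 : x^2 < 1 := by nlinarith
      have huθ : 0 < 1 - x^2 * Real.sin θ ^ 2 := by
        nlinarith [Real.sin_sq_le_one θ, sq_nonneg (Real.sin θ)]
      have hub_le : 1 - b^2 ≤ 1 - x^2 * Real.sin θ ^ 2 := by
        nlinarith [Real.sin_sq_le_one θ, sq_nonneg (Real.sin θ)]
      have hnum : x * Real.sin θ^2 ≤ b := by
        nlinarith [Real.sin_sq_le_one θ, sq_nonneg (Real.sin θ)]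
      have hden : (1 - b^2) * Real.sqrt (1 - b^2)
          ≤ (1 - x^2 * Real.sin θ ^ 2) * Real.sqrt (1 - x^2 * Real.sin θ ^ 2) :=
        mul_le_mul hub_le (Real.sqrt_le_sqrt hub_le) (Real.sqrt_nonneg _) huθ.le
      rw [Real.norm_eq_abs, abs_of_nonneg (by positivity)]
      exact div_le_div₀ hb0.le hnum (by positivity) hden))
    (intervalIntegrable_const)
    (Filter.Eventually.of_forall (fun θ _ x hx => by
      obtain ⟨hx0, hxb⟩ := hball x hx
      have huθ : 0 < 1 - x^2 * Real.sin θ ^ 2 := by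
        nlinarith [Real.sin_sq_le_one θ, sq_nonneg (Real.sin θ)]
      exact hasDerivAt_F huθ))
  have h2 := main.2
  rw [integral_identity hk0 hk1] at h2
  exact h2
end

section
/- The complete elliptic integral of the first kind satisfies the Gauß (Landen-type) transformation: K(k) = (1 + k₁) K(k₁), where k' = √(1-k²) and k₁ = (1-k')/(1+k'), for all 0 < k < 1. -/
open Real MeasureTheory Set Filter

open Topology

lemma gcont {a b : ℝ} (ha : 0 < a) (hb : 0 < b) :
    Continuous fun t : ℝ => (Real.sqrt ((t^2+a^2)*(t^2+b^2)))⁻¹ := by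
  apply Continuous.inv₀
  · fun_prop
  · intro t
    positivity

lemma gintegrable {a b : ℝ} (ha : 0 < a) (hb : 0 < b) :
    Integrable (fun t : ℝ => (Real.sqrt ((t^2+a^2)*(t^2+b^2)))⁻¹) := by
  set m : ℝ := min (min a b) 1 with hm
  have hm0 : 0 < m := by positivity
  have hma : m ≤ a := (min_le_left _ _).trans (min_le_left _ _)
  have hmb : m ≤ b := (min_le_left _ _).trans (min_le_right _ _)
  have hm1 : m ≤ 1 := min_le_right _ _
  have key : ∀ t : ℝ, ‖(Real.sqrt ((t^2+a^2)*(t^2+b^2)))⁻¹‖ ≤ (m^2)⁻¹ * (1 + t^2)⁻¹ := by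
    intro t
    have hm2a : m^2 ≤ a^2 := by nlinarith
    have hm2b : m^2 ≤ b^2 := by nlinarith
    have hm21 : m^2 ≤ 1 := by nlinarith
    have hmt : m^2 * t^2 ≤ t^2 := by nlinarith [mul_le_mul_of_nonneg_right hm21 (sq_nonneg t)]
    have h1 : m^2 * (1 + t^2) ≤ t^2 + a^2 := by nlinarith
    have h2 : m^2 * (1 + t^2) ≤ t^2 + b^2 := by nlinarith
    have h3 : (m^2 * (1+t^2))^2 ≤ (t^2+a^2)*(t^2+b^2) := by
      have : (0:ℝ) < m^2*(1+t^2) := by positivity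
      nlinarith
    have h4 : m^2 * (1+t^2) ≤ Real.sqrt ((t^2+a^2)*(t^2+b^2)) := by
      rw [show m^2*(1+t^2) = Real.sqrt ((m^2*(1+t^2))^2) by
        rw [Real.sqrt_sq (by positivity)]]
      exact Real.sqrt_le_sqrt h3
    rw [Real.norm_eq_abs, abs_of_nonneg (by positivity)]
    rw [← mul_inv]
    exact inv_anti₀ (by positivity) h4
  refine (Integrable.const_mul (integrable_inv_one_add_sq) ((m^2)⁻¹)).mono' ?_ ?_
  · exact ((gcont ha hb).aestronglyMeasurable)
  · exact Eventually.of_forall key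

lemma Fpos {a b : ℝ} (ha : 0 < a) (hb : 0 < b) (θ : ℝ) :
    0 < a^2 * Real.cos θ^2 + b^2 * Real.sin θ^2 := by
  rcases le_or_gt (a^2) (b^2) with h | h
  · nlinarith [Real.sin_sq_add_cos_sq θ, sq_nonneg (Real.sin θ), sq_nonneg (Real.cos θ)]
  · nlinarith [Real.sin_sq_add_cos_sq θ, sq_nonneg (Real.sin θ), sq_nonneg (Real.cos θ)]

lemma Fcont {a b : ℝ} (ha : 0 < a) (hb : 0 < b) :
    Continuous fun θ : ℝ => (Real.sqrt (a^2 * Real.cos θ^2 + b^2 * Real.sin θ^2))⁻¹ := by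
  apply Continuous.inv₀
  · fun_prop
  · exact fun θ => ne_of_gt (Real.sqrt_pos.2 (Fpos ha hb θ))

lemma trig_eq_J {a b : ℝ} (ha : 0 < a) (hb : 0 < b) :
    (∫ θ in (0:ℝ)..(π/2), (Real.sqrt (a^2 * Real.cos θ^2 + b^2 * Real.sin θ^2))⁻¹)
      = ∫ t in Ioi (0:ℝ), (Real.sqrt ((t^2+a^2)*(t^2+b^2)))⁻¹ := by
  set F : ℝ → ℝ := fun θ => (Real.sqrt (a^2 * Real.cos θ^2 + b^2 * Real.sin θ^2))⁻¹ with hF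
  set G : ℝ → ℝ := fun t => (Real.sqrt ((t^2+a^2)*(t^2+b^2)))⁻¹ with hG
  have key : ∀ x : ℝ, (∫ t in (0:ℝ)..x, G t) = ∫ θ in (0:ℝ)..(arctan (x/b)), F θ := by
    intro x
    have hd : ∀ t ∈ uIcc (0:ℝ) x, HasDerivAt (fun t => arctan (t/b)) (b/(b^2+t^2)) t := by
      intro t _
      have h1 : HasDerivAt (fun t : ℝ => t/b) (1/b) t := by
        simpa using (hasDerivAt_id t).div_const b
      have h2 := (Real.hasDerivAt_arctan (t/b)).comp t h1
      refine h2.congr_deriv ?_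
      symm
      have : (1:ℝ) + (t/b)^2 ≠ 0 := by positivity
      have hb0 : b ≠ 0 := ne_of_gt hb
      have hb2 : b^2 + t^2 ≠ 0 := by positivity
      rw [div_pow, one_add_div (pow_ne_zero 2 hb0), one_div_div, div_mul_div_comm, mul_one,
        div_eq_div_iff hb2 (mul_ne_zero hb2 hb0)]
      ring
    have h' : ContinuousOn (fun t : ℝ => b/(b^2+t^2)) (uIcc (0:ℝ) x) := by
      apply Continuous.continuousOn
      exact continuous_const.div (by fun_prop) (fun t => by positivity)
    have := intervalIntegral.integral_comp_mul_deriv hd h' (Fcont ha hb)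
    rw [show arctan (0/b) = 0 by simp] at this
    rw [← this]
    apply intervalIntegral.integral_congr
    intro t _
    show G t = F (arctan (t/b)) * (b/(b^2+t^2))
    simp only [hF, hG]
    set sa := Real.sqrt (t^2+a^2) with hsa
    set sb := Real.sqrt (t^2+b^2) with hsb
    have hsa0 : 0 < sa := Real.sqrt_pos.2 (by positivity)
    have hsb0 : 0 < sb := Real.sqrt_pos.2 (by positivity)
    have hsa2 : sa^2 = t^2+a^2 := Real.sq_sqrt (by positivity)
    have hsb2 : sb^2 = t^2+b^2 := Real.sq_sqrt (by positivity)
    have hX : a^2 * Real.cos (arctan (t/b))^2 + b^2 * Real.sin (arctan (t/b))^2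
        = (sa*b/sb)^2 := by
      rw [Real.cos_arctan, Real.sin_arctan]
      set S := Real.sqrt (1+(t/b)^2) with hS
      have h1 : (0:ℝ) < 1 + (t/b)^2 := by positivity
      have hS2 : S^2 = 1 + (t/b)^2 := Real.sq_sqrt h1.le
      have hsbs : (sa*b/sb)^2 = (t^2+a^2)*b^2/(t^2+b^2) := by
        rw [div_pow, mul_pow, hsa2, hsb2]
      rw [div_pow, div_pow, hS2, hsbs]
      have hb' : b ≠ 0 := ne_of_gt hb
      have h3 : t^2 + b^2 ≠ 0 := by positivity
      field_simp
      ring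
    rw [hX, Real.sqrt_sq (by positivity)]
    have : Real.sqrt ((t^2+a^2)*(t^2+b^2)) = sa * sb := by
      rw [hsa, hsb, ← Real.sqrt_mul (by positivity)]
    rw [this]
    have hb2 : b^2 + t^2 = sb^2 := by rw [hsb2]; ring
    rw [hb2]
    field_simp
  -- now limits
  have hGint : IntegrableOn G (Ioi 0) := (gintegrable ha hb).integrableOn
  have t1 : Tendsto (fun x : ℝ => ∫ t in (0:ℝ)..x, G t) atTop (𝓝 (∫ t in Ioi (0:ℝ), G t)) :=
    intervalIntegral_tendsto_integral_Ioi 0 hGint tendsto_id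
  have hFint : ∀ c d : ℝ, IntervalIntegrable F volume c d :=
    fun c d => (Fcont ha hb).intervalIntegrable c d
  have hcontprim : Continuous fun y : ℝ => ∫ θ in (0:ℝ)..y, F θ :=
    intervalIntegral.continuous_primitive hFint 0
  have harctan : Tendsto (fun x : ℝ => arctan (x/b)) atTop (𝓝 (π/2)) := by
    apply (tendsto_nhds_of_tendsto_nhdsWithin Real.tendsto_arctan_atTop).comp
    exact Tendsto.atTop_div_const hb tendsto_id
  have t2 : Tendsto (fun x : ℝ => ∫ θ in (0:ℝ)..(arctan (x/b)), F θ) atTop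
      (𝓝 (∫ θ in (0:ℝ)..(π/2), F θ)) :=
    (hcontprim.tendsto _).comp harctan
  have := tendsto_nhds_unique (t1.congr (fun x => key x)) t2
  linarith

lemma J_agm {a b : ℝ} (ha : 0 < a) (hb : 0 < b) :
    (∫ t in Ioi (0:ℝ), (Real.sqrt ((t^2+a^2)*(t^2+b^2)))⁻¹)
      = ∫ u in Ioi (0:ℝ), (Real.sqrt ((u^2+((a+b)/2)^2)*(u^2+a*b)))⁻¹ := by
  have hab : 0 < a*b := mul_pos ha hb
  have hA : 0 < (a+b)/2 := by linarith
  set G : ℝ → ℝ := fun t => (Real.sqrt ((t^2+a^2)*(t^2+b^2)))⁻¹ with hGdef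
  set g : ℝ → ℝ := fun u => (Real.sqrt ((u^2+((a+b)/2)^2)*(u^2+a*b)))⁻¹ with hgdef
  have hgG : g = fun u : ℝ => (Real.sqrt ((u^2+((a+b)/2)^2)*(u^2+(Real.sqrt (a*b))^2)))⁻¹ := by
    funext u; rw [hgdef]; simp only [Real.sq_sqrt hab.le]
  have hgcont : Continuous g := by rw [hgG]; exact gcont hA (Real.sqrt_pos.2 hab)
  have hgint : Integrable g := by rw [hgG]; exact gintegrable hA (Real.sqrt_pos.2 hab)
  have hGcont : Continuous G := gcont ha hb
  have hGint : IntegrableOn G (Ioi 0) := (gintegrable ha hb).integrableOn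
  set f : ℝ → ℝ := fun t => (t - a*b/t)/2 with hfdef
  have key : ∀ x ∈ Ioi (0:ℝ),
      (∫ t in (a*b/x)..x, 2 * G t) = ∫ u in (-(f x))..(f x), g u := by
    intro x hx
    rw [mem_Ioi] at hx
    have hcx : 0 < a*b/x := by positivity
    have hpos : ∀ t ∈ uIcc (a*b/x) x, 0 < t := by
      intro t ht
      rcases mem_uIcc.mp ht with ⟨h, _⟩ | ⟨h, _⟩ <;> linarith
    have hd : ∀ t ∈ uIcc (a*b/x) x, HasDerivAt f ((t^2+a*b)/(2*t^2)) t := by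
      intro t ht
      have ht0 : t ≠ 0 := ne_of_gt (hpos t ht)
      have h1 : HasDerivAt (fun t : ℝ => a*b/t) ((a*b) * (-(t^2)⁻¹)) t := by
        simpa [div_eq_mul_inv] using (hasDerivAt_inv ht0).const_mul (a*b)
      have h2 : HasDerivAt f ((1 - (a*b) * (-(t^2)⁻¹))/2) t :=
        ((hasDerivAt_id t).sub h1).div_const 2
      have e : (1 - a*b*(-(t^2)⁻¹))/2 = (t^2+a*b)/(2*t^2) := by
        rw [mul_neg, sub_neg_eq_add]
        rw [div_eq_div_iff two_ne_zero (by positivity)]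
        field_simp
      exact e ▸ h2
    have h' : ContinuousOn (fun t : ℝ => (t^2+a*b)/(2*t^2)) (uIcc (a*b/x) x) := by
      apply ContinuousOn.div (by fun_prop) (by fun_prop)
      intro t ht
      have := hpos t ht
      positivity
    have heq := intervalIntegral.integral_comp_mul_deriv hd h' hgcont
    have hfc : f (a*b/x) = -(f x) := by
      rw [hfdef]
      simp only
      rw [div_div_eq_mul_div]
      field_simp
      ring
    rw [hfc] at heq
    rw [← heq]
    apply intervalIntegral.integral_congr
    intro t ht
    have ht0 : 0 < t := hpos t ht
    show 2 * G t = g (f t) * ((t^2+a*b)/(2*t^2))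
    set s := Real.sqrt ((t^2+a^2)*(t^2+b^2)) with hs
    have hs0 : 0 < s := Real.sqrt_pos.2 (by positivity)
    have hs2 : s^2 = (t^2+a^2)*(t^2+b^2) := Real.sq_sqrt (by positivity)
    have hprod : ((f t)^2+((a+b)/2)^2)*((f t)^2+a*b) = (s*(t^2+a*b)/(4*t^2))^2 := by
      have hR : (s*(t^2+a*b)/(4*t^2))^2 = (t^2+a^2)*(t^2+b^2)*(t^2+a*b)^2/(16*t^4) := by
        rw [div_pow, mul_pow, hs2]
        ring
      rw [hR, hfdef]
      simp only
      field_simp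
      ring
    have hgft : g (f t) = (s*(t^2+a*b)/(4*t^2))⁻¹ := by
      rw [hgdef]
      simp only
      rw [hprod, Real.sqrt_sq (by positivity)]
    rw [hgft, hGdef]
    simp only
    rw [← hs]
    field_simp
    ring
  -- limits
  have hGint2 : IntegrableOn (fun t => 2 * G t) (Ioi (0:ℝ)) := hGint.const_mul 2
  have hφ : Tendsto (fun x : ℝ => ∫ t in (0:ℝ)..x, 2 * G t) atTop
      (𝓝 (∫ t in Ioi (0:ℝ), 2 * G t)) :=
    intervalIntegral_tendsto_integral_Ioi 0 hGint2 tendsto_id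
  have h2Gc : Continuous fun t => 2 * G t := continuous_const.mul hGcont
  have hcont2 : Continuous fun y : ℝ => ∫ t in (0:ℝ)..y, 2 * G t :=
    intervalIntegral.continuous_primitive (fun c d => h2Gc.intervalIntegrable c d) 0
  have habx : Tendsto (fun x : ℝ => a*b/x) atTop (𝓝 0) :=
    tendsto_const_nhds.div_atTop tendsto_id
  have hψ : Tendsto (fun x : ℝ => ∫ t in (0:ℝ)..(a*b/x), 2 * G t) atTop (𝓝 0) := by
    have := (hcont2.tendsto 0).comp habx
    simpa [Function.comp_def] using this
  have hsub : ∀ x : ℝ, (∫ t in (a*b/x)..x, 2 * G t)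
      = (∫ t in (0:ℝ)..x, 2 * G t) - ∫ t in (0:ℝ)..(a*b/x), 2 * G t := by
    intro x
    rw [intervalIntegral.integral_interval_sub_left (h2Gc.intervalIntegrable 0 x)
      (h2Gc.intervalIntegrable 0 (a*b/x))]
  have L1 : Tendsto (fun x : ℝ => ∫ t in (a*b/x)..x, 2 * G t) atTop
      (𝓝 (∫ t in Ioi (0:ℝ), 2 * G t)) := by
    have := hφ.sub hψ
    rw [sub_zero] at this
    exact this.congr (fun x => (hsub x).symm)
  have hfx : Tendsto f atTop atTop := by
    have h1 : Tendsto (fun x : ℝ => x - a*b/x) atTop atTop := by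
      have := tendsto_id.atTop_add habx.neg
      refine this.congr (fun x => ?_)
      simp [sub_eq_add_neg]
    exact h1.atTop_div_const two_pos
  have L2 : Tendsto (fun x : ℝ => ∫ u in (-(f x))..(f x), g u) atTop (𝓝 (∫ u, g u)) :=
    intervalIntegral_tendsto_integral hgint (tendsto_neg_atTop_atBot.comp hfx) hfx
  have hmain : (∫ t in Ioi (0:ℝ), 2 * G t) = ∫ u, g u :=
    tendsto_nhds_unique (L1.congr' (eventuallyEq_of_mem (Ioi_mem_atTop 0) key)) L2
  have heven : (∫ u in Iic (0:ℝ), g u) = ∫ u in Ioi (0:ℝ), g u := by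
    have := integral_comp_neg_Ioi (0:ℝ) g
    rw [neg_zero] at this
    rw [← this]
    apply setIntegral_congr_fun measurableSet_Ioi
    intro u _
    rw [hgdef]
    simp only [neg_sq]
  have hsplit : (∫ u, g u) = 2 * ∫ u in Ioi (0:ℝ), g u := by
    rw [← intervalIntegral.integral_Iic_add_Ioi hgint.integrableOn hgint.integrableOn, heven]
    ring
  have h2G : (∫ t in Ioi (0:ℝ), 2 * G t) = 2 * ∫ t in Ioi (0:ℝ), G t :=
    integral_const_mul 2 G
  rw [h2G, hsplit] at hmain
  linarith

lemma Jscale {p q : ℝ} {c : ℝ} (hc : 0 < c) :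
    (∫ t in Ioi (0:ℝ), (Real.sqrt ((t^2+(c*p)^2)*(t^2+(c*q)^2)))⁻¹)
      = c⁻¹ * ∫ t in Ioi (0:ℝ), (Real.sqrt ((t^2+p^2)*(t^2+q^2)))⁻¹ := by
  have h := integral_comp_mul_left_Ioi
    (fun t : ℝ => (Real.sqrt ((t^2+(c*p)^2)*(t^2+(c*q)^2)))⁻¹) 0 hc
  rw [mul_zero] at h
  have h2 : (∫ x in Ioi (0:ℝ), (Real.sqrt (((c*x)^2+(c*p)^2)*(((c*x))^2+(c*q)^2)))⁻¹)
      = c⁻¹ * c⁻¹ * ∫ x in Ioi (0:ℝ), (Real.sqrt ((x^2+p^2)*(x^2+q^2)))⁻¹ := by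
    rw [← integral_const_mul]
    apply setIntegral_congr_fun measurableSet_Ioi
    intro x _
    simp only
    have e : ((c*x)^2+(c*p)^2)*((c*x)^2+(c*q)^2) = (c^2)^2 * ((x^2+p^2)*(x^2+q^2)) := by ring
    rw [e, Real.sqrt_mul (by positivity), Real.sqrt_sq (by positivity), mul_inv]
    ring
  rw [h2] at h
  have hc' : c⁻¹ ≠ 0 := inv_ne_zero (ne_of_gt hc)
  rw [smul_eq_mul] at h
  have h3 : c⁻¹ * (∫ t in Ioi (0:ℝ), (Real.sqrt ((t^2+(c*p)^2)*(t^2+(c*q)^2)))⁻¹)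
      = c⁻¹ * (c⁻¹ * ∫ t in Ioi (0:ℝ), (Real.sqrt ((t^2+p^2)*(t^2+q^2)))⁻¹) := by
    rw [← mul_assoc]
    exact h.symm
  exact mul_left_cancel₀ hc' h3

lemma Kel_eq_J {κ : ℝ} (h0 : 0 < κ) (h1 : κ < 1) :
    Kel κ = ∫ t in Ioi (0:ℝ),
      (Real.sqrt ((t^2+1^2)*(t^2+(Real.sqrt (1-κ^2))^2)))⁻¹ := by
  rw [Kel, ← trig_eq_J one_pos (Real.sqrt_pos.2 (by nlinarith))]
  apply intervalIntegral.integral_congr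
  intro θ _
  show (1:ℝ) / Real.sqrt (1 - κ^2 * Real.sin θ^2)
      = (Real.sqrt (1^2 * Real.cos θ^2 + Real.sqrt (1-κ^2)^2 * Real.sin θ^2))⁻¹
  rw [one_div]
  congr 2
  rw [Real.sq_sqrt (by nlinarith), one_pow]
  linear_combination -Real.sin_sq_add_cos_sq θ

theorem gauss_transform_K (k k' k₁ : ℝ) (hk0 : 0 < k) (hk1 : k < 1)
    (hk' : k' = Real.sqrt (1 - k^2)) (hk₁ : k₁ = (1 - k') / (1 + k')) :
    Kel k = (1 + k₁) * Kel k₁ := by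
  have hk'0 : 0 < k' := by rw [hk']; exact Real.sqrt_pos.2 (by nlinarith)
  have hk'1 : k' < 1 := by
    rw [hk']
    have h := Real.sqrt_lt_sqrt (by nlinarith : (0:ℝ) ≤ 1 - k^2) (by nlinarith : 1-k^2 < 1)
    simpa using h
  have hk'sq : k'^2 = 1 - k^2 := by rw [hk']; exact Real.sq_sqrt (by nlinarith)
  have hk₁0 : 0 < k₁ := by rw [hk₁]; exact div_pos (by linarith) (by linarith)
  have hk₁1 : k₁ < 1 := by rw [hk₁, div_lt_one (by linarith)]; linarith
  set c : ℝ := (1+k')/2 with hc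
  have hc0 : 0 < c := by rw [hc]; linarith
  have hq0 : (0:ℝ) < 1 - k₁^2 := by nlinarith
  set q : ℝ := Real.sqrt (1-k₁^2) with hq
  have hq2 : q^2 = 1 - k₁^2 := Real.sq_sqrt hq0.le
  have hcq : (c*q)^2 = 1*k' := by
    rw [mul_pow, hq2, hc, hk₁]
    have h1 : (1:ℝ) + k' ≠ 0 := by linarith
    field_simp
    ring
  have e1 : Kel k = ∫ t in Ioi (0:ℝ), (Real.sqrt ((t^2+1^2)*(t^2+k'^2)))⁻¹ := by
    rw [Kel_eq_J hk0 hk1, hk']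
  have e2 : Kel k₁ = ∫ t in Ioi (0:ℝ), (Real.sqrt ((t^2+1^2)*(t^2+q^2)))⁻¹ := by
    rw [Kel_eq_J hk₁0 hk₁1, hq]
  have e3 := J_agm one_pos hk'0
  have e4 : (∫ u in Ioi (0:ℝ), (Real.sqrt ((u^2+((1+k')/2)^2)*(u^2+1*k')))⁻¹)
      = ∫ u in Ioi (0:ℝ), (Real.sqrt ((u^2+(c*1)^2)*(u^2+(c*q)^2)))⁻¹ := by
    apply setIntegral_congr_fun measurableSet_Ioi
    intro u _
    rw [hcq, mul_one, ← hc]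
  have e5 := Jscale (p := 1) (q := q) hc0
  have hcinv : c⁻¹ = 1 + k₁ := by
    rw [hc, hk₁]
    have h1 : (1:ℝ) + k' ≠ 0 := by linarith
    field_simp
    ring
  rw [e1, e3, e4, e5, hcinv, e2]
end

section
/- The complete elliptic integral of the second kind satisfies the Gauß transformation: E(k) = (1 + k') E(k₁) - k'(1 + k₁) K(k₁), where k' = √(1-k²) and k₁ = (1-k')/(1+k'), for all 0 < k < 1. -/
open Real MeasureTheory Set Filter

set_option maxHeartbeats 1000000

open intervalIntegral in
section

lemma alg_id (m s c d : ℝ) (hc2 : c^2 = 1-s^2) (hd2 : d^2 = 1-m^2*s^2)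
    (hd0 : d ≠ 0) (hden : 1+m*s^2 ≠ 0) (hm : (1:ℝ)+m ≠ 0) :
    (1+m)*(1-m*s^2)^2/((1+m*s^2)^2*d) - (2/(1+m)*d - (1-m)*(1/d)) =
    2*m/(1+m) * ((((c*c + s*(-s))*d + (s*c)*(-(m^2*(2*s*c))/(2*d))) * (1+m*s^2)
        - s*c*d*(m*(2*s*c)))/(1+m*s^2)^2) := by
  field_simp
  linear_combination ((2)*m^2*s^2*d^2 + (2)*m^4*s^4 + (-2)*m*d^2 + (2)*m^3*s^2) * hc2 + ((-2) + (2)*m^2*s^2 + (-2)*m^2*s^4 + (-2)*m) * hd2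


-- key derivative identity
lemma hasDeriv_G (m : ℝ) (hm0 : 0 < m) (hm1 : m < 1) (φ : ℝ) :
    HasDerivAt (fun φ => 2*m/(1+m) * (Real.sin φ * Real.cos φ *
        Real.sqrt (1 - m^2 * Real.sin φ^2) / (1 + m * Real.sin φ^2)))
      ((1+m)*(1 - m*Real.sin φ^2)^2 / ((1+m*Real.sin φ^2)^2 * Real.sqrt (1 - m^2*Real.sin φ^2))
        - (2/(1+m) * Real.sqrt (1 - m^2*Real.sin φ^2)
           - (1-m) * (1 / Real.sqrt (1 - m^2*Real.sin φ^2)))) φ := by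
  set s := Real.sin φ with hs
  set c := Real.cos φ with hc
  have hs2 : s^2 ≤ 1 := sin_sq_le_one φ
  have hq : 0 < 1 - m^2 * s^2 := by nlinarith
  have hden : 0 < 1 + m * s^2 := by nlinarith
  have hdpos : 0 < Real.sqrt (1 - m^2 * s^2) := Real.sqrt_pos.mpr hq
  set d := Real.sqrt (1 - m^2 * s^2) with hd
  have hd2 : d^2 = 1 - m^2 * s^2 := Real.sq_sqrt hq.le
  have hsin : HasDerivAt Real.sin c φ := Real.hasDerivAt_sin φ
  have hcos : HasDerivAt Real.cos (-s) φ := Real.hasDerivAt_cos φ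
  have hsin2 : HasDerivAt (fun φ => Real.sin φ^2) (2*s*c) φ := by
    simpa [mul_comm, mul_assoc] using hsin.fun_pow 2
  have hqd : HasDerivAt (fun φ => 1 - m^2 * Real.sin φ^2) (-(m^2 * (2*s*c))) φ :=
    ((hsin2.const_mul (m^2)).const_sub 1)
  have hsqrt : HasDerivAt (fun φ => Real.sqrt (1 - m^2 * Real.sin φ^2))
      (-(m^2 * (2*s*c)) / (2*d)) φ := by
    have := (Real.hasDerivAt_sqrt (ne_of_gt hq)).comp φ hqd
    simpa [mul_comm, div_eq_mul_inv, Function.comp_def] using this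
  have hnum : HasDerivAt (fun φ => Real.sin φ * Real.cos φ *
      Real.sqrt (1 - m^2 * Real.sin φ^2))
      ((c*c + s*(-s)) * d + (s*c) * (-(m^2 * (2*s*c)) / (2*d))) φ := by
    exact (hsin.mul hcos).mul hsqrt
  have hdend : HasDerivAt (fun φ => 1 + m * Real.sin φ^2) (m * (2*s*c)) φ :=
    (hsin2.const_mul m).const_add 1
  have hfrac := (hnum.fun_div hdend (ne_of_gt hden))
  have final := hfrac.const_mul (2*m/(1+m))
  refine final.congr_deriv ?_
  have hc2 : c^2 = 1 - s^2 := by rw [hs, hc]; simpa using Real.cos_sq' φ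
  have hm1' : (0:ℝ) < 1 + m := by linarith
  exact (alg_id m s c d hc2 hd2 (ne_of_gt hdpos) (ne_of_gt hden) (by linarith)).symm

lemma cont_sqrtq (m : ℝ) : Continuous (fun φ : ℝ => Real.sqrt (1 - m^2 * Real.sin φ^2)) :=
  (continuous_const.sub (continuous_const.mul ((Real.continuous_sin).pow 2))).sqrt

lemma sqrtq_pos (m : ℝ) (hm1 : m < 1) (hm0 : 0 < m) (φ : ℝ) :
    0 < Real.sqrt (1 - m^2 * Real.sin φ^2) := by
  have := Real.sin_sq_le_one φ
  apply Real.sqrt_pos.mpr; nlinarith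

lemma ftc_part (m : ℝ) (hm0 : 0 < m) (hm1 : m < 1) :
    (∫ φ in (0:ℝ)..(π/2),
      (1+m)*(1 - m*Real.sin φ^2)^2 / ((1+m*Real.sin φ^2)^2 * Real.sqrt (1 - m^2*Real.sin φ^2)))
    = 2/(1+m) * Eel m - (1-m) * Kel m := by
  have hsq := cont_sqrtq m
  have hsqpos := sqrtq_pos m hm1 hm0
  have hdenpos : ∀ φ : ℝ, (0:ℝ) < 1 + m * Real.sin φ^2 := by
    intro φ; nlinarith [sq_nonneg (Real.sin φ), Real.sin_sq_le_one φ]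
  have hcont1 : Continuous (fun φ : ℝ =>
      (1+m)*(1 - m*Real.sin φ^2)^2 / ((1+m*Real.sin φ^2)^2 * Real.sqrt (1 - m^2*Real.sin φ^2))) := by
    apply Continuous.div
    · fun_prop
    · exact (((continuous_const.add (continuous_const.mul ((Real.continuous_sin).pow 2))).pow 2).mul hsq)
    · intro φ; exact (mul_pos (pow_pos (hdenpos φ) 2) (hsqpos φ)).ne'
  have hcont2 : Continuous (fun φ : ℝ => Real.sqrt (1 - m^2 * Real.sin φ^2)) := hsq
  have hcont3 : Continuous (fun φ : ℝ => 1 / Real.sqrt (1 - m^2 * Real.sin φ^2)) := by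
    apply Continuous.div continuous_const hsq
    intro φ; exact (hsqpos φ).ne'
  have hD : ∀ φ ∈ uIcc (0:ℝ) (π/2), HasDerivAt (fun φ => 2*m/(1+m) * (Real.sin φ * Real.cos φ *
        Real.sqrt (1 - m^2 * Real.sin φ^2) / (1 + m * Real.sin φ^2)))
      ((1+m)*(1 - m*Real.sin φ^2)^2 / ((1+m*Real.sin φ^2)^2 * Real.sqrt (1 - m^2*Real.sin φ^2))
        - (2/(1+m) * Real.sqrt (1 - m^2*Real.sin φ^2)
           - (1-m) * (1 / Real.sqrt (1 - m^2*Real.sin φ^2)))) φ :=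
    fun φ _ => hasDeriv_G m hm0 hm1 φ
  have hInt : IntervalIntegrable (fun φ =>
      (1+m)*(1 - m*Real.sin φ^2)^2 / ((1+m*Real.sin φ^2)^2 * Real.sqrt (1 - m^2*Real.sin φ^2))
        - (2/(1+m) * Real.sqrt (1 - m^2*Real.sin φ^2)
           - (1-m) * (1 / Real.sqrt (1 - m^2*Real.sin φ^2)))) volume 0 (π/2) := by
    apply Continuous.intervalIntegrable
    exact hcont1.sub (((continuous_const.mul hcont2)).sub ((continuous_const.mul hcont3)))
  have := intervalIntegral.integral_eq_sub_of_hasDerivAt hD hInt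
  rw [intervalIntegral.integral_sub (hcont1.intervalIntegrable _ _)
      ((((continuous_const.fun_mul hcont2)).fun_sub ((continuous_const.fun_mul hcont3))).intervalIntegrable _ _)] at this
  simp only [Real.sin_zero, Real.sin_pi_div_two, Real.cos_pi_div_two, Real.cos_zero] at this
  rw [intervalIntegral.integral_sub (((continuous_const.fun_mul hcont2)).intervalIntegrable _ _)
      (((continuous_const.fun_mul hcont3)).intervalIntegrable _ _),
      intervalIntegral.integral_const_mul, intervalIntegral.integral_const_mul] at this
  simp only [mul_zero, zero_mul, mul_one, one_mul, sub_zero, zero_div] at this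
  rw [Eel, Kel]
  norm_num at this
  simp only [one_div] at this ⊢
  linarith [this]

lemma subst_part (k m : ℝ) (hm0 : 0 < m) (hm1 : m < 1) (hk2 : k^2 = 4*m/(1+m)^2) :
    Eel k = ∫ φ in (0:ℝ)..(π/2),
      (1+m)*(1 - m*Real.sin φ^2)^2 / ((1+m*Real.sin φ^2)^2 * Real.sqrt (1 - m^2*Real.sin φ^2)) := by
  have hm1' : (0:ℝ) < 1 + m := by linarith
  have hdenpos : ∀ φ : ℝ, (0:ℝ) < 1 + m * Real.sin φ^2 := by
    intro φ; nlinarith [sq_nonneg (Real.sin φ)]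
  have hqpos : ∀ φ : ℝ, (0:ℝ) < 1 - m^2 * Real.sin φ^2 := by
    intro φ; nlinarith [Real.sin_sq_le_one φ]
  have hsqpos : ∀ φ : ℝ, 0 < Real.sqrt (1 - m^2 * Real.sin φ^2) :=
    fun φ => Real.sqrt_pos.mpr (hqpos φ)
  have hcu : Continuous (fun φ : ℝ => (1+m)*Real.sin φ/(1+m*Real.sin φ^2)) := by
    apply Continuous.div (continuous_const.mul Real.continuous_sin)
      (continuous_const.add (continuous_const.mul (Real.continuous_sin.pow 2)))
    exact fun φ => (hdenpos φ).ne'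
  have hf_cont : ContinuousOn (fun φ : ℝ => Real.arcsin ((1+m)*Real.sin φ/(1+m*Real.sin φ^2)))
      (uIcc (0:ℝ) (π/2)) := (Real.continuous_arcsin.comp hcu).continuousOn
  have hf'_cont : ContinuousOn (fun φ : ℝ =>
      (1+m)*(1-m*Real.sin φ^2)/((1+m*Real.sin φ^2)*Real.sqrt (1-m^2*Real.sin φ^2)))
      (uIcc (0:ℝ) (π/2)) := by
    apply Continuous.continuousOn
    apply Continuous.div
    · exact continuous_const.mul (continuous_const.sub (continuous_const.mul (Real.continuous_sin.pow 2)))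
    · exact (continuous_const.add (continuous_const.mul (Real.continuous_sin.pow 2))).mul
        ((continuous_const.sub (continuous_const.mul (Real.continuous_sin.pow 2))).sqrt)
    · exact fun φ => (mul_pos (hdenpos φ) (hsqpos φ)).ne'
  have hg_cont : ContinuousOn (fun x : ℝ => Real.sqrt (1 - k^2 * Real.sin x ^ 2))
      ((fun φ : ℝ => Real.arcsin ((1+m)*Real.sin φ/(1+m*Real.sin φ^2))) '' (uIcc (0:ℝ) (π/2))) :=
    ((continuous_const.sub (continuous_const.mul (Real.continuous_sin.pow 2))).sqrt).continuousOn
  have h0pi : (0:ℝ) ≤ π/2 := by positivity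
  have hderiv : ∀ x ∈ Ioo ((0:ℝ) ⊓ (π/2)) ((0:ℝ) ⊔ (π/2)),
      HasDerivWithinAt (fun φ : ℝ => Real.arcsin ((1+m)*Real.sin φ/(1+m*Real.sin φ^2)))
        ((1+m)*(1-m*Real.sin x^2)/((1+m*Real.sin x^2)*Real.sqrt (1-m^2*Real.sin x^2))) (Ioi x) x := by
    intro x hx
    rw [inf_eq_left.2 h0pi, sup_eq_right.2 h0pi] at hx
    obtain ⟨hx1, hx2⟩ := hx
    have hs0 : 0 < Real.sin x := Real.sin_pos_of_pos_of_lt_pi hx1 (by linarith [Real.pi_pos])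
    have hcpos : 0 < Real.cos x := Real.cos_pos_of_mem_Ioo ⟨by linarith [Real.pi_pos], hx2⟩
    have hpyth := Real.sin_sq_add_cos_sq x
    have hs1 : Real.sin x < 1 := by nlinarith
    set s := Real.sin x with hsdef
    have hu_lt : (1+m)*s/(1+m*s^2) < 1 := by
      rw [div_lt_one (hdenpos x)]
      nlinarith [mul_pos (sub_pos.2 hs1) (sub_pos.2 (show m*s < 1 by nlinarith))]
    have hu_pos : 0 < (1+m)*s/(1+m*s^2) := by positivity
    have hdend : HasDerivAt (fun φ : ℝ => 1 + m*Real.sin φ^2) (m*(2*s*Real.cos x)) x := by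
      have hsin2 : HasDerivAt (fun φ : ℝ => Real.sin φ^2) (2*s*Real.cos x) x := by
        simpa [hsdef, mul_comm, mul_assoc] using (Real.hasDerivAt_sin x).fun_pow 2
      exact (hsin2.const_mul m).const_add 1
    have hnum : HasDerivAt (fun φ : ℝ => (1+m)*Real.sin φ) ((1+m)*Real.cos x) x :=
      (Real.hasDerivAt_sin x).const_mul (1+m)
    have hu : HasDerivAt (fun φ : ℝ => (1+m)*Real.sin φ/(1+m*Real.sin φ^2))
        ((1+m)*Real.cos x*(1-m*s^2)/(1+m*s^2)^2) x := by
      have := hnum.fun_div hdend (ne_of_gt (hdenpos x))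
      refine this.congr_deriv ?_
      field_simp
      ring
    have ha : HasDerivAt Real.arcsin (1/Real.sqrt (1-((1+m)*s/(1+m*s^2))^2))
        ((1+m)*s/(1+m*s^2)) :=
      Real.hasDerivAt_arcsin (by linarith) (ne_of_lt hu_lt)
    have hcomp := ha.comp x hu
    have hsq_eq : Real.sqrt (1-((1+m)*s/(1+m*s^2))^2)
        = Real.cos x * Real.sqrt (1-m^2*s^2)/(1+m*s^2) := by
      have hd2 : Real.sqrt (1-m^2*s^2)^2 = 1-m^2*s^2 := Real.sq_sqrt (hqpos x).le
      rw [show 1-((1+m)*s/(1+m*s^2))^2 = (Real.cos x * Real.sqrt (1-m^2*s^2)/(1+m*s^2))^2 by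
        field_simp
        nlinarith [hd2, hpyth]]
      exact Real.sqrt_sq (by positivity)
    apply HasDerivAt.hasDerivWithinAt
    refine hcomp.congr_deriv ?_
    rw [hsq_eq]
    field_simp [hcpos.ne', (hsqpos x).ne', (hdenpos x).ne']
  have key := intervalIntegral.integral_comp_mul_deriv'' hf_cont hderiv hf'_cont hg_cont
  have hf0 : Real.arcsin ((1+m)*Real.sin 0/(1+m*Real.sin 0^2)) = 0 := by simp
  have hfpi : Real.arcsin ((1+m)*Real.sin (π/2)/(1+m*Real.sin (π/2)^2)) = π/2 := by
    rw [Real.sin_pi_div_two, show (1+m)*1/(1+m*1^2) = 1 by field_simp]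
    exact Real.arcsin_one
  rw [hf0, hfpi] at key
  rw [Eel, ← key]
  apply intervalIntegral.integral_congr
  intro φ hφ
  rw [uIcc_of_le h0pi] at hφ
  have hs0 : 0 ≤ Real.sin φ := Real.sin_nonneg_of_nonneg_of_le_pi hφ.1 (by linarith [Real.pi_pos, hφ.2])
  have hs1 : Real.sin φ ≤ 1 := Real.sin_le_one φ
  set s := Real.sin φ with hsdef
  have hu1 : (1+m)*s/(1+m*s^2) ≤ 1 := by
    rw [div_le_one (hdenpos φ)]
    nlinarith [mul_nonneg (sub_nonneg.2 hs1) (sub_nonneg.2 (show m*s ≤ 1 by nlinarith))]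
  have hu0 : 0 ≤ (1+m)*s/(1+m*s^2) := by positivity
  simp only [Function.comp_apply]
  rw [Real.sin_arcsin (by linarith) hu1]
  have h1 : 1 - k^2*((1+m)*s/(1+m*s^2))^2 = ((1-m*s^2)/(1+m*s^2))^2 := by
    rw [hk2]; field_simp; ring
  rw [h1, Real.sqrt_sq (div_nonneg (by nlinarith) (hdenpos φ).le)]
  field_simp [(hsqpos φ).ne', (hdenpos φ).ne']
  ring

end

theorem gauss_transform_E (k k' k₁ : ℝ) (hk0 : 0 < k) (hk1 : k < 1)
    (hk' : k' = Real.sqrt (1 - k^2)) (hk₁ : k₁ = (1 - k') / (1 + k')) :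
    Eel k = (1 + k') * Eel k₁ - k' * (1 + k₁) * Kel k₁ := by
  have hk2' : 0 < 1 - k^2 := by nlinarith
  have hk'0 : 0 < k' := hk' ▸ Real.sqrt_pos.mpr hk2'
  have hk'sq : k'^2 = 1 - k^2 := by rw [hk']; exact Real.sq_sqrt hk2'.le
  have hk'1 : k' < 1 := by nlinarith
  have h1k' : (0:ℝ) < 1 + k' := by linarith
  have hm0 : 0 < k₁ := hk₁ ▸ div_pos (by linarith) h1k'
  have hm1 : k₁ < 1 := by rw [hk₁, div_lt_one h1k']; linarith
  have hk2 : k^2 = 4*k₁/(1+k₁)^2 := by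
    rw [hk₁]
    rw [show 1 + (1-k')/(1+k') = 2/(1+k') by field_simp; ring]
    field_simp
    linear_combination 4 * hk'sq
  have h1k₁ : (0:ℝ) < 1 + k₁ := by linarith
  have e1 : k' * (1+k₁) = 1 - k₁ := by
    rw [hk₁]; field_simp; ring
  have e2 : (2:ℝ)/(1+k₁) = 1 + k' := by
    rw [hk₁, show 1 + (1-k')/(1+k') = 2/(1+k') by field_simp; ring]
    rw [div_div_eq_mul_div]
    field_simp
  rw [subst_part k k₁ hm0 hm1 hk2, ftc_part k₁ hm0 hm1, e2, e1]
end

section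
/- For real numbers 0 < b̃ < ã, the integral ∫_0^∞ √((ã² + t²)/(b̃² + t²)³) dt equals (1/ã)·E(k)/(1-k²) where k² = 1 - b̃²/ã². -/
open Real MeasureTheory Set Filter

theorem integral_sqrt_ratio (a b k : ℝ) (hb : 0 < b) (hab : b < a)
    (hk0 : 0 < k) (hk : k^2 = 1 - b^2 / a^2) :
    ∫ t in Set.Ioi (0:ℝ), Real.sqrt ((a^2 + t^2) / (b^2 + t^2)^3)
      = (1 / a) * Eel k / (1 - k^2) := by
  have ha : 0 < a := hb.trans hab
  have ha' : a ≠ 0 := ha.ne'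
  have hb' : b ≠ 0 := hb.ne'
  set s : Set ℝ := Ioo 0 (π/2) with hs_def
  have hs : MeasurableSet s := measurableSet_Ioo
  set f : ℝ → ℝ := fun θ => b * Real.tan θ with hf_def
  -- image
  have himg : f '' s = Ioi (0:ℝ) := by
    ext y
    constructor
    · rintro ⟨θ, ⟨h0, h2⟩, rfl⟩
      have : 0 < Real.tan θ := Real.tan_pos_of_pos_of_lt_pi_div_two h0 h2
      exact mul_pos hb this
    · intro hy
      have hpos : 0 < Real.arctan (y / b) := by
        have := Real.arctan_strictMono (div_pos hy hb)
        simpa [Real.arctan_zero] using this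
      refine ⟨Real.arctan (y / b), ⟨hpos, Real.arctan_lt_pi_div_two _⟩, ?_⟩
      simp only [f, Real.tan_arctan]
      field_simp
  -- injectivity
  have hinj : InjOn f s := by
    have : InjOn Real.tan s := Real.injOn_tan.mono (Set.Ioo_subset_Ioo (by linarith [Real.pi_div_two_pos]) le_rfl)
    intro x hx y hy hxy
    exact this hx hy (mul_left_cancel₀ hb' hxy)
  -- derivative
  have hderiv : ∀ θ ∈ s, HasDerivWithinAt f (b / Real.cos θ ^ 2) s θ := by
    intro θ hθ
    have hcos : Real.cos θ ≠ 0 := by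
      have : 0 < Real.cos θ := Real.cos_pos_of_mem_Ioo ⟨by linarith [hθ.1, Real.pi_div_two_pos], hθ.2⟩
      exact this.ne'
    have := (Real.hasDerivAt_tan hcos).const_mul b
    have h' := this.hasDerivWithinAt (s := s)
    rw [mul_one_div] at h'
    exact h'
  rw [← himg, MeasureTheory.integral_image_eq_integral_abs_deriv_smul hs hderiv hinj]
  -- pointwise rewriting on s
  have hEq : ∀ θ ∈ s,
      |b / Real.cos θ ^ 2| • Real.sqrt ((a^2 + (f θ)^2) / (b^2 + (f θ)^2)^3)
        = (a / b^2) * Real.sqrt (1 - k^2 * Real.sin θ ^ 2) := by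
    intro θ hθ
    have hcos : 0 < Real.cos θ := Real.cos_pos_of_mem_Ioo ⟨by linarith [hθ.1, Real.pi_div_two_pos], hθ.2⟩
    have hcos' : Real.cos θ ≠ 0 := hcos.ne'
    have hpyth : Real.sin θ ^ 2 + Real.cos θ ^ 2 = 1 := Real.sin_sq_add_cos_sq θ
    have hsin : Real.sin θ ^ 2 = 1 - Real.cos θ ^ 2 := by linarith
    have htan : Real.tan θ = Real.sin θ / Real.cos θ := Real.tan_eq_sin_div_cos θ
    have h1 : b^2 + (f θ)^2 = b^2 / Real.cos θ ^ 2 := by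
      simp only [hf_def, htan, mul_pow, div_pow, hsin]
      field_simp
      ring
    have h2 : a^2 + (f θ)^2 = a^2 * (1 - k^2 * Real.sin θ ^ 2) / Real.cos θ ^ 2 := by
      simp only [hf_def, htan, mul_pow, div_pow, hk, hsin]
      field_simp
      ring
    have harg : (a^2 + (f θ)^2) / (b^2 + (f θ)^2)^3
        = (a * Real.cos θ ^ 2 / b^3)^2 * (1 - k^2 * Real.sin θ ^ 2) := by
      rw [h1, h2]
      field_simp
    rw [harg, Real.sqrt_mul (sq_nonneg _), Real.sqrt_sq (by positivity)]
    rw [smul_eq_mul, abs_of_pos (by positivity)]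
    field_simp
  rw [MeasureTheory.setIntegral_congr_fun hs hEq, MeasureTheory.integral_const_mul]
  have hEel : ∫ θ in s, Real.sqrt (1 - k^2 * Real.sin θ ^ 2) = Eel k := by
    rw [Eel, intervalIntegral.integral_of_le (by positivity), MeasureTheory.integral_Ioc_eq_integral_Ioo]
  rw [hEel]
  have h1k : 1 - k^2 = b^2 / a^2 := by rw [hk]; ring
  rw [h1k]
  field_simp
end

section
/- For real numbers a > c > 0, the integral ∫_0^π √((a + c cos t)/(a - c cos t)³) dt equals 2E(k)/(a - c) with modulus k = 2√(ac)/(a+c). -/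
open Real MeasureTheory Set Filter

theorem integral_cos_ratio (a c : ℝ) (hc : 0 < c) (hac : c < a) :
    ∫ t in (0:ℝ)..π, Real.sqrt ((a + c * Real.cos t) / (a - c * Real.cos t)^3)
      = 2 * Eel (2 * Real.sqrt (a * c) / (a + c)) / (a - c) := by
  have ha : 0 < a := hc.trans hac
  have hpos : ∀ E : ℝ, 0 < a + c * Real.cos E := fun E => by
    nlinarith [Real.neg_one_le_cos E]
  have hneg : ∀ E : ℝ, 0 < a - c * Real.cos E := fun E => by
    nlinarith [Real.cos_le_one E]
  have hd2 : (0:ℝ) < a^2 - c^2 := by nlinarith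
  have hPpos : ∀ E : ℝ, 0 < a^2 + c^2 + 2*a*c*Real.cos E := fun E => by
    have h1 : (0:ℝ) < (a - c)^2 := by nlinarith
    have h2 : (0:ℝ) ≤ 2*a*c*(1 + Real.cos E) :=
      mul_nonneg (by positivity) (by linarith [Real.neg_one_le_cos E])
    nlinarith
  set g : ℝ → ℝ := fun t => Real.sqrt ((a + c * Real.cos t) / (a - c * Real.cos t)^3) with hg
  set u : ℝ → ℝ := fun E => (c + a * Real.cos E) / (a + c * Real.cos E) with hu
  set φ : ℝ → ℝ := fun E => Real.arccos (u E) with hφ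
  set D : ℝ → ℝ := fun E => Real.sqrt (a^2 - c^2) / (a + c * Real.cos E) with hD
  have hu_le : ∀ E, u E ≤ 1 := fun E => by
    simp only [hu]; rw [div_le_one (hpos E)]; nlinarith [Real.cos_le_one E]
  have hu_ge : ∀ E, -1 ≤ u E := fun E => by
    simp only [hu]; rw [le_div_iff₀ (hpos E)]; nlinarith [Real.neg_one_le_cos E]
  have hcosφ : ∀ E, Real.cos (φ E) = u E := fun E => Real.cos_arccos (hu_ge E) (hu_le E)
  have hsqrtd : (0:ℝ) < Real.sqrt (a^2 - c^2) := Real.sqrt_pos.mpr hd2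
  have hsq2 : Real.sqrt (a^2 - c^2) ^ 2 = a^2 - c^2 := Real.sq_sqrt hd2.le
  -- derivative of φ on the interior
  have hderiv : ∀ E ∈ Ioo (0:ℝ) π, HasDerivAt φ (D E) E := by
    intro E hE
    have hsin : 0 < Real.sin E := Real.sin_pos_of_pos_of_lt_pi hE.1 hE.2
    have hcos1 : Real.cos E < 1 := by
      have h := Real.cos_lt_cos_of_nonneg_of_le_pi (le_refl 0) hE.2.le hE.1
      simpa using h
    have hcosm1 : -1 < Real.cos E := by
      have h := Real.cos_lt_cos_of_nonneg_of_le_pi hE.1.le (le_refl π) hE.2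
      simpa using h
    have hq : (a + c * Real.cos E) ≠ 0 := (hpos E).ne'
    have hsinne : Real.sin E ≠ 0 := hsin.ne'
    have hsne : Real.sqrt (a^2 - c^2) ≠ 0 := hsqrtd.ne'
    have hune1 : u E ≠ 1 := by
      simp only [hu]
      intro h; rw [div_eq_one_iff_eq hq] at h; nlinarith
    have hunem1 : u E ≠ -1 := by
      simp only [hu]
      intro h; rw [div_eq_iff hq] at h; nlinarith
    have hU : HasDerivAt u (-((a^2 - c^2) * Real.sin E) / (a + c * Real.cos E)^2) E := by
      have h1 : HasDerivAt (fun E => c + a * Real.cos E) (a * (-Real.sin E)) E :=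
        ((Real.hasDerivAt_cos E).const_mul a).const_add c
      have h2 : HasDerivAt (fun E => a + c * Real.cos E) (c * (-Real.sin E)) E :=
        ((Real.hasDerivAt_cos E).const_mul c).const_add a
      have h3 := h1.div h2 hq
      rw [hu]
      refine h3.congr_deriv ?_
      ring
    have hA : HasDerivAt φ (-(1 / Real.sqrt (1 - u E ^ 2)) *
        (-((a^2 - c^2) * Real.sin E) / (a + c * Real.cos E)^2)) E := by
      rw [hφ]
      exact (Real.hasDerivAt_arccos hunem1 hune1).comp E hU
    convert hA using 1
    have hsq : 1 - u E ^ 2 = (Real.sqrt (a^2 - c^2) * Real.sin E / (a + c * Real.cos E))^2 := by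
      have hs : Real.sin E ^ 2 = 1 - Real.cos E ^ 2 := by
        nlinarith [Real.sin_sq_add_cos_sq E]
      have hr : (Real.sqrt (a^2 - c^2) * Real.sin E / (a + c * Real.cos E))^2
          = (a^2 - c^2) * Real.sin E^2 / (a + c * Real.cos E)^2 := by
        rw [div_pow, mul_pow, hsq2]
      rw [hr, hs]
      simp only [hu]
      field_simp
      ring
    have hnn : 0 ≤ Real.sqrt (a^2 - c^2) * Real.sin E / (a + c * Real.cos E) :=
      div_nonneg (mul_nonneg (Real.sqrt_nonneg _) hsin.le) (hpos E).le
    rw [hsq, Real.sqrt_sq hnn]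
    have hstep : -(1 / (Real.sqrt (a^2 - c^2) * Real.sin E / (a + c * Real.cos E))) *
        (-((a^2 - c^2) * Real.sin E) / (a + c * Real.cos E)^2)
        = (a^2 - c^2) / (Real.sqrt (a^2 - c^2) * (a + c * Real.cos E)) := by
      field_simp
    rw [hstep]
    simp only [hD]
    rw [div_eq_div_iff hq (mul_ne_zero hsne hq)]
    linear_combination (a + c * Real.cos E) * hsq2
  -- endpoint values
  have hφ0 : φ 0 = 0 := by
    simp only [hφ, hu, Real.cos_zero, mul_one]
    rw [show (c + a)/(a + c) = 1 by rw [div_eq_one_iff_eq (by positivity : a + c ≠ 0)]; ring]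
    exact Real.arccos_one
  have hφπ : φ π = π := by
    simp only [hφ, hu, Real.cos_pi, mul_neg_one]
    rw [show (c + -a)/(a + -c) = -1 by
      rw [div_eq_iff (by nlinarith : a + -c ≠ 0)]; ring]
    exact Real.arccos_neg_one
  -- continuity facts
  have hcont1 : Continuous fun t : ℝ => a + c * Real.cos t :=
    continuous_const.add (continuous_const.mul Real.continuous_cos)
  have hcont2 : Continuous fun t : ℝ => (a - c * Real.cos t)^3 :=
    ((continuous_const.sub (continuous_const.mul Real.continuous_cos)).pow 3)
  have hcont3 : Continuous fun t : ℝ => c + a * Real.cos t :=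
    continuous_const.add (continuous_const.mul Real.continuous_cos)
  have hgcont : Continuous g := by
    rw [hg]
    exact Real.continuous_sqrt.comp <|
      hcont1.div hcont2 fun t => pow_ne_zero 3 (hneg t).ne'
  have hφcont : Continuous φ := by
    rw [hφ, hu]
    exact Real.continuous_arccos.comp <| hcont3.div hcont1 fun t => (hpos t).ne'
  have hDcont : Continuous D := by
    rw [hD]
    exact continuous_const.div hcont1 fun t => (hpos t).ne'
  -- the substitution
  have hsub : (∫ x in (0:ℝ)..π, D x • (g ∘ φ) x) = ∫ t in (φ 0)..(φ π), g t := by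
    apply intervalIntegral.integral_comp_smul_deriv'' hφcont.continuousOn
    · intro x hx
      rw [min_eq_left Real.pi_pos.le, max_eq_right Real.pi_pos.le] at hx
      exact (hderiv x hx).hasDerivWithinAt
    · exact hDcont.continuousOn
    · exact hgcont.continuousOn
  -- pointwise value of the substituted integrand
  have hpoint : ∀ E : ℝ, D E • g (φ E)
      = Real.sqrt (a^2 + c^2 + 2*a*c*Real.cos E) / (a^2 - c^2) := by
    intro E
    have hq : (a + c * Real.cos E) ≠ 0 := (hpos E).ne'
    have hdne : (a^2 - c^2) ≠ 0 := hd2.ne'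
    rw [smul_eq_mul]
    simp only [hg]
    rw [hcosφ E]
    simp only [hD, hu]
    have h1 : a + c * ((c + a*Real.cos E)/(a + c*Real.cos E))
        = (a^2 + c^2 + 2*a*c*Real.cos E)/(a + c*Real.cos E) := by
      field_simp; ring
    have h2 : a - c * ((c + a*Real.cos E)/(a + c*Real.cos E))
        = (a^2 - c^2)/(a + c*Real.cos E) := by
      field_simp; ring
    rw [h1, h2]
    have h3 : (a^2 + c^2 + 2*a*c*Real.cos E)/(a + c*Real.cos E) /
        ((a^2 - c^2)/(a + c*Real.cos E))^3
        = (a^2 + c^2 + 2*a*c*Real.cos E) * (a + c*Real.cos E)^2 / (a^2 - c^2)^3 := by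
      field_simp
    rw [h3]
    have harg : 0 ≤ (a^2 + c^2 + 2*a*c*Real.cos E) * (a + c*Real.cos E)^2 / (a^2 - c^2)^3 :=
      div_nonneg (mul_nonneg (hPpos E).le (sq_nonneg _)) (pow_nonneg hd2.le 3)
    have hLnn : 0 ≤ Real.sqrt (a^2 - c^2) / (a + c * Real.cos E) *
        Real.sqrt ((a^2 + c^2 + 2*a*c*Real.cos E) * (a + c*Real.cos E)^2 / (a^2 - c^2)^3) :=
      mul_nonneg (div_nonneg (Real.sqrt_nonneg _) (hpos E).le) (Real.sqrt_nonneg _)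
    have hRnn : 0 ≤ Real.sqrt (a^2 + c^2 + 2*a*c*Real.cos E) / (a^2 - c^2) :=
      div_nonneg (Real.sqrt_nonneg _) hd2.le
    have hsqs : (Real.sqrt (a^2 - c^2) / (a + c * Real.cos E) *
        Real.sqrt ((a^2 + c^2 + 2*a*c*Real.cos E) * (a + c*Real.cos E)^2 / (a^2 - c^2)^3))^2
        = (Real.sqrt (a^2 + c^2 + 2*a*c*Real.cos E) / (a^2 - c^2))^2 := by
      rw [mul_pow, div_pow, div_pow, hsq2, Real.sq_sqrt harg, Real.sq_sqrt (hPpos E).le]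
      field_simp
    have hfin := congrArg Real.sqrt hsqs
    rwa [Real.sqrt_sq hLnn, Real.sqrt_sq hRnn] at hfin
  -- compute Eel
  have hk2 : (2 * Real.sqrt (a*c) / (a+c))^2 = 4*a*c/(a+c)^2 := by
    rw [div_pow, mul_pow, Real.sq_sqrt (by positivity : (0:ℝ) ≤ a*c)]
    ring
  have hEel : Eel (2 * Real.sqrt (a*c)/(a+c))
      = ∫ θ in (0:ℝ)..(π/2), Real.sqrt (a^2+c^2+2*a*c*Real.cos (2*θ)) / (a+c) := by
    rw [Eel]
    apply intervalIntegral.integral_congr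
    intro θ _
    show Real.sqrt (1 - (2 * Real.sqrt (a*c)/(a+c))^2 * Real.sin θ^2)
        = Real.sqrt (a^2+c^2+2*a*c*Real.cos (2*θ)) / (a+c)
    have h1 : 1 - (2*Real.sqrt (a*c)/(a+c))^2 * Real.sin θ^2
        = (a^2+c^2+2*a*c*Real.cos (2*θ)) / (a+c)^2 := by
      rw [hk2, Real.cos_two_mul]
      have hs : Real.sin θ ^ 2 = 1 - Real.cos θ ^ 2 := by
        nlinarith [Real.sin_sq_add_cos_sq θ]
      have hacne : (a + c) ≠ 0 := by positivity
      rw [hs]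
      field_simp
      ring
    rw [h1, Real.sqrt_div (hPpos (2*θ)).le, Real.sqrt_sq (by positivity : (0:ℝ) ≤ a+c)]
  have hsub2 : (∫ θ in (0:ℝ)..(π/2), Real.sqrt (a^2+c^2+2*a*c*Real.cos (2*θ)) / (a+c))
      = 2⁻¹ * ∫ E in (0:ℝ)..π, Real.sqrt (a^2+c^2+2*a*c*Real.cos E) / (a+c) := by
    have h := intervalIntegral.integral_comp_mul_left
      (f := fun E => Real.sqrt (a^2+c^2+2*a*c*Real.cos E)/(a+c)) (a := 0) (b := π/2)
      (c := (2:ℝ)) two_ne_zero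
    rw [show (2:ℝ) * 0 = 0 by ring, show (2:ℝ) * (π/2) = π by ring, smul_eq_mul] at h
    exact h
  -- assemble
  have hmain : (∫ t in (0:ℝ)..π, g t)
      = ∫ E in (0:ℝ)..π, Real.sqrt (a^2+c^2+2*a*c*Real.cos E) / (a^2 - c^2) := by
    have h' : (∫ t in (0:ℝ)..π, g t) = ∫ x in (0:ℝ)..π, D x • (g ∘ φ) x := by
      rw [hsub, hφ0, hφπ]
    rw [h']
    exact intervalIntegral.integral_congr fun E _ => hpoint E
  rw [hmain, hEel, hsub2]
  rw [intervalIntegral.integral_div, intervalIntegral.integral_div]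
  set I := ∫ E in (0:ℝ)..π, Real.sqrt (a^2+c^2+2*a*c*Real.cos E) with hI
  have h1 : (a + c) ≠ 0 := by positivity
  have h2 : (a - c) ≠ 0 := by nlinarith
  have h3 : (a^2 - c^2) ≠ 0 := hd2.ne'
  field_simp
  ring
end

section
/- For fixed a > 0 and c = √(a²+b²) with b > 0, the combined area integral of one period of the patched nodoid, 4πab² ∫_0^π √((c + a cos t)/(c - a cos t)³) dt, equals 8πa(a+c)E(2√(ac)/(a+c)). -/
open Real MeasureTheory Set Filter

lemma cos_two_arctan (x : ℝ) : Real.cos (2 * Real.arctan x) = (1 - x^2)/(1 + x^2) := by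
  have h : (0:ℝ) < 1 + x^2 := by positivity
  rw [Real.cos_two_mul, Real.cos_sq_arctan]
  field_simp; ring

lemma sin_two_arctan (x : ℝ) : Real.sin (2 * Real.arctan x) = 2*x/(1 + x^2) := by
  have h : (0:ℝ) < 1 + x^2 := by positivity
  have h0 : Real.sqrt (1 + x^2) ≠ 0 := by positivity
  rw [Real.sin_two_mul, Real.sin_arctan, Real.cos_arctan]
  field_simp
  rw [Real.sq_sqrt h.le]

lemma Eel_eq (a c : ℝ) (ha : 0 < a) (hc0 : 0 < c) :
    Eel (2 * Real.sqrt (a * c) / (a + c))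
      = (1/(2*(a+c))) * ∫ u in (0:ℝ)..π, Real.sqrt (a^2 + c^2 + 2*a*c * Real.cos u) := by
  have hac0 : 0 < a + c := by linarith
  have hk2 : (2 * Real.sqrt (a * c) / (a + c))^2 = 4*(a*c)/(a+c)^2 := by
    rw [div_pow, mul_pow, Real.sq_sqrt (by positivity : (0:ℝ) ≤ a*c)]
    ring_nf
  have h1 : ∀ θ : ℝ, Real.sqrt (1 - (2 * Real.sqrt (a * c) / (a + c))^2 * Real.sin θ^2)
      = Real.sqrt (a^2 + c^2 + 2*a*c * Real.cos (2*θ)) / (a+c) := by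
    intro θ
    have hrad : 1 - (2 * Real.sqrt (a * c) / (a + c))^2 * Real.sin θ^2
        = (a^2 + c^2 + 2*a*c * Real.cos (2*θ)) / (a+c)^2 := by
      rw [hk2, Real.cos_two_mul]
      have hs := Real.sin_sq_add_cos_sq θ
      field_simp
      linear_combination (-4*a*c) * hs
    have hnn : (0:ℝ) ≤ a^2 + c^2 + 2*a*c * Real.cos (2*θ) := by
      nlinarith [Real.neg_one_le_cos (2*θ), Real.cos_le_one (2*θ), sq_nonneg (a-c), mul_pos ha hc0]
    rw [hrad, Real.sqrt_div hnn, Real.sqrt_sq hac0.le]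
  have e1 : Eel (2 * Real.sqrt (a * c) / (a + c))
      = ∫ θ in (0:ℝ)..(π/2), Real.sqrt (a^2 + c^2 + 2*a*c * Real.cos (2*θ)) / (a+c) :=
    intervalIntegral.integral_congr (fun θ _ => h1 θ)
  have e2 : (∫ θ in (0:ℝ)..(π/2), Real.sqrt (a^2 + c^2 + 2*a*c * Real.cos (2*θ)) / (a+c))
      = (∫ θ in (0:ℝ)..(π/2), Real.sqrt (a^2 + c^2 + 2*a*c * Real.cos (2*θ))) / (a+c) :=
    intervalIntegral.integral_div _ _
  have h2 := intervalIntegral.integral_comp_mul_left (a := (0:ℝ)) (b := π/2)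
    (fun u : ℝ => Real.sqrt (a^2 + c^2 + 2*a*c * Real.cos u)) (two_ne_zero)
  rw [show (2:ℝ) * 0 = 0 by ring, show (2:ℝ) * (π/2) = π by ring, smul_eq_mul] at h2
  have h2' : (∫ θ in (0:ℝ)..(π/2), Real.sqrt (a^2 + c^2 + 2*a*c * Real.cos (2*θ)))
      = 2⁻¹ * ∫ u in (0:ℝ)..π, Real.sqrt (a^2 + c^2 + 2*a*c * Real.cos u) := by
    simpa using h2
  have key : ∀ x : ℝ, (2⁻¹ * x)/(a+c) = 1/(2*(a+c)) * x := fun x => by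
    field_simp
  rw [e1, e2, h2']
  exact key _

set_option maxHeartbeats 2000000 in
theorem nodoid_area (a b c : ℝ) (ha : 0 < a) (hb : 0 < b)
    (hc : c = Real.sqrt (a^2 + b^2)) :
    4 * π * a * b^2 * ∫ t in (0:ℝ)..π,
        Real.sqrt ((c + a * Real.cos t) / (c - a * Real.cos t)^3)
      = 8 * π * a * (a + c) * Eel (2 * Real.sqrt (a * c) / (a + c)) := by
  have hab : (0:ℝ) ≤ a^2 + b^2 := by positivity
  have hc2 : c^2 = a^2 + b^2 := by rw [hc, Real.sq_sqrt hab]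
  have hc0 : 0 < c := by rw [hc]; positivity
  have hca : a < c := by nlinarith
  have hcb : b < c := by nlinarith
  set μ := (c - b)/a with hμdef
  have hμ0 : 0 < μ := div_pos (by linarith) ha
  have hμ1 : μ < 1 := by rw [hμdef, div_lt_one ha]; nlinarith
  have hkey : a * (1 + μ^2) = 2 * c * μ := by
    rw [hμdef]; field_simp; nlinarith [hc2]
  have hkey2 : a * (1 - μ^2) = 2 * b * μ := by
    rw [hμdef]; field_simp; nlinarith [hc2]
  have hden1 : ∀ t : ℝ, 0 < 1 - μ * Real.cos t := by
    intro t
    nlinarith [Real.cos_le_one t, Real.neg_one_le_cos t]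
  have hden2 : ∀ t : ℝ, 0 < 1 + μ^2 - 2 * μ * Real.cos t := by
    intro t
    nlinarith [Real.cos_le_one t, Real.neg_one_le_cos t, sq_nonneg (1 - μ)]
  have hcak : ∀ t : ℝ, 0 < c - a * Real.cos t := by
    intro t
    nlinarith [Real.cos_le_one t, Real.neg_one_le_cos t]
  have hcak' : ∀ t : ℝ, 0 ≤ c + a * Real.cos t := by
    intro t
    nlinarith [Real.cos_le_one t, Real.neg_one_le_cos t]
  set ψ : ℝ → ℝ := fun t => t + 2 * Real.arctan (μ * Real.sin t / (1 - μ * Real.cos t))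
    with hψdef
  -- derivative of ψ
  have hderiv : ∀ t : ℝ, HasDerivAt ψ (b / (c - a * Real.cos t)) t := by
    intro t
    have h1 := hden1 t
    have hu := (((Real.hasDerivAt_sin t).const_mul μ).div
        (((Real.hasDerivAt_cos t).const_mul μ).const_sub 1) h1.ne')
    have harc := (Real.hasDerivAt_arctan (μ * Real.sin t / (1 - μ * Real.cos t))).comp t hu
    have hψ' := (hasDerivAt_id t).add (harc.const_mul 2)
    have hψ'' : HasDerivAt ψ _ t := hψ'
    convert hψ'' using 1
    have hs := Real.sin_sq_add_cos_sq t
    have h2 := (hden2 t).ne'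
    have h3 := (hcak t).ne'
    have h4 : (1 + (μ * Real.sin t / (1 - μ * Real.cos t))^2) ≠ 0 := by positivity
    have h5 : b * (1 + μ^2 - 2*μ*Real.cos t) = (1 - μ^2) * (c - a * Real.cos t) := by
      apply mul_left_cancel₀ ha.ne'
      linear_combination b * hkey - (c - a * Real.cos t) * hkey2
    have h1' : 1 - Real.cos t * μ ≠ 0 := by rw [mul_comm]; exact h1.ne'
    field_simp
    linear_combination h5
      + μ^2 * (b + c - a*Real.cos t) * hs
  -- cos of ψ
  have hcosψ : ∀ t : ℝ, Real.cos (ψ t)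
      = ((1 + μ^2) * Real.cos t - 2*μ) / (1 + μ^2 - 2 * μ * Real.cos t) := by
    intro t
    have h1 := hden1 t
    have h2 := hden2 t
    have hs := Real.sin_sq_add_cos_sq t
    set s := Real.sin t
    set k := Real.cos t
    have hu2 : 1 + (μ * s / (1 - μ * k))^2 = (1 + μ^2 - 2*μ*k)/(1 - μ*k)^2 := by
      field_simp
      linear_combination μ^2 * hs
    have h1u : 1 - (μ * s / (1 - μ * k))^2 = (1 - 2*μ*k - μ^2 + 2*μ^2*k^2)/(1 - μ*k)^2 := by
      field_simp
      linear_combination (-μ^2) * hs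
    show Real.cos (t + 2 * Real.arctan (μ * s / (1 - μ * k))) = _
    rw [Real.cos_add, cos_two_arctan, sin_two_arctan, hu2, h1u]
    have hss : s * (2 * (μ * s / (1 - μ*k)) / ((1 + μ^2 - 2*μ*k)/(1 - μ*k)^2))
        = 2*μ*(1-k^2)*(1-μ*k)/(1 + μ^2 - 2*μ*k) := by
      rw [div_div_eq_mul_div]
      field_simp
      linear_combination hs
    rw [hss]
    rw [div_div_eq_mul_div, div_mul_eq_mul_div, div_div]
    field_simp
    ring
  -- pointwise identity
  have hpoint : ∀ t : ℝ,
      (b / (c - a * Real.cos t)) • Real.sqrt (a^2 + c^2 + 2*a*c * Real.cos (ψ t))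
      = b^2 * Real.sqrt ((c + a * Real.cos t) / (c - a * Real.cos t)^3) := by
    intro t
    have h2 := (hden2 t).ne'
    have h3 := hcak t
    have h3' := hcak' t
    set k := Real.cos t with hk
    have hA : a^2 + c^2 + 2*a*c * Real.cos (ψ t) = b^2 * ((c + a*k)/(c - a*k)) := by
      rw [hcosψ t, ← hk]
      apply mul_left_cancel₀ ha.ne'
      field_simp
      apply mul_left_cancel₀ ha.ne'
      linear_combination ((c-a*k)*(a^2+c^2+2*a*c*k) - b^2*(c+a*k)) * hkey
        + (2*μ*(c+a*k)*(c-a*k)) * hc2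
    rw [smul_eq_mul, hA, Real.sqrt_mul (by positivity : (0:ℝ) ≤ b^2),
      Real.sqrt_sq hb.le, Real.sqrt_div h3', Real.sqrt_div h3']
    have h4 : Real.sqrt ((c - a*k)^3) = (c - a*k) * Real.sqrt (c - a*k) := by
      rw [pow_succ, Real.sqrt_mul (by positivity), Real.sqrt_sq h3.le]
    have h5 : Real.sqrt (c - a*k) ≠ 0 := by positivity
    rw [h4]
    field_simp
  -- substitution
  have hg : Continuous fun u : ℝ => Real.sqrt (a^2 + c^2 + 2*a*c * Real.cos u) :=
    Real.continuous_sqrt.comp (by fun_prop)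
  have hsub : b^2 * (∫ t in (0:ℝ)..π, Real.sqrt ((c + a * Real.cos t) / (c - a * Real.cos t)^3))
      = ∫ u in (0:ℝ)..π, Real.sqrt (a^2 + c^2 + 2*a*c * Real.cos u) := by
    have h0 : ψ 0 = 0 := by simp [hψdef]
    have hπ : ψ π = π := by simp [hψdef]
    have hcont : ContinuousOn (fun t : ℝ => b / (c - a * Real.cos t)) (Set.uIcc 0 π) :=
      (continuous_const.div (by fun_prop) (fun t => (hcak t).ne')).continuousOn
    rw [← intervalIntegral.integral_const_mul]
    rw [intervalIntegral.integral_congr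
        (g := fun t => (b / (c - a * Real.cos t)) • Real.sqrt (a^2 + c^2 + 2*a*c * Real.cos (ψ t)))
        (fun t _ => (hpoint t).symm)]
    have hmain := intervalIntegral.integral_comp_smul_deriv
      (fun t (_ : t ∈ Set.uIcc 0 π) => hderiv t) hcont hg
    rw [h0, hπ] at hmain
    exact hmain
  -- Eel identity
  have hac0 : 0 < a + c := by linarith
  have hE := Eel_eq a c ha hc0
  rw [hE, ← hsub]
  set I := ∫ t in (0:ℝ)..π, Real.sqrt ((c + a * Real.cos t) / (c - a * Real.cos t)^3) with hI
  field_simp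
  ring
end

section
/- The function c ↦ c[E(1/c) - (1 - 1/c²)K(1/c)] defined on (1, ∞) has derivative E(1/c) - K(1/c) at every c > 1; in particular it is strictly decreasing. -/
open Real MeasureTheory Set Filter

lemma key_pos {c : ℝ} (hc : 1 < c) (θ : ℝ) : 0 < c^2 - Real.sin θ^2 := by
  nlinarith [Real.sin_sq_le_one θ]

lemma S_pos {c : ℝ} (hc : 1 < c) (θ : ℝ) : 0 < Real.sqrt (c^2 - Real.sin θ^2) :=
  Real.sqrt_pos.2 (key_pos hc θ)

lemma S_cont {c : ℝ} : Continuous (fun θ : ℝ => Real.sqrt (c^2 - Real.sin θ^2)) := by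
  fun_prop

lemma sqrt_rw {c : ℝ} (hc : 1 < c) (θ : ℝ) :
    Real.sqrt (1 - (1/c)^2 * Real.sin θ ^ 2) = Real.sqrt (c^2 - Real.sin θ^2) / c := by
  have hc0 : (0:ℝ) < c := lt_trans one_pos hc
  have h : 1 - (1/c)^2 * Real.sin θ^2 = (c^2 - Real.sin θ^2) / c^2 := by
    field_simp
  rw [h, Real.sqrt_div (key_pos hc θ).le, Real.sqrt_sq hc0.le]

lemma eel_eq {c : ℝ} (hc : 1 < c) :
    Eel (1/c) = ∫ θ in (0:ℝ)..(π/2), Real.sqrt (c^2 - Real.sin θ^2) / c := by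
  unfold Eel
  exact intervalIntegral.integral_congr fun θ _ => sqrt_rw hc θ

lemma kel_eq {c : ℝ} (hc : 1 < c) :
    Kel (1/c) = ∫ θ in (0:ℝ)..(π/2), c / Real.sqrt (c^2 - Real.sin θ^2) := by
  unfold Kel
  refine intervalIntegral.integral_congr fun θ _ => ?_
  rw [sqrt_rw hc θ]
  have hc0 : (0:ℝ) < c := lt_trans one_pos hc
  rw [one_div_div]

lemma cont_div {c : ℝ} (hc : 1 < c) (g : ℝ → ℝ) (hg : Continuous g) :
    Continuous (fun θ : ℝ => g θ / Real.sqrt (c^2 - Real.sin θ^2)) :=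
  hg.div S_cont (fun θ => (S_pos hc θ).ne')

lemma f_eq {c : ℝ} (hc : 1 < c) :
    c * (Eel (1/c) - (1 - 1/c^2) * Kel (1/c)) =
      ∫ θ in (0:ℝ)..(π/2), Real.cos θ^2 / Real.sqrt (c^2 - Real.sin θ^2) := by
  have hc0 : (0:ℝ) < c := lt_trans one_pos hc
  have h1 : (∫ θ in (0:ℝ)..(π/2), Real.cos θ^2 / Real.sqrt (c^2 - Real.sin θ^2)) =
      ∫ θ in (0:ℝ)..(π/2), (c * (Real.sqrt (c^2 - Real.sin θ^2) / c)
        - (c - 1/c) * (c / Real.sqrt (c^2 - Real.sin θ^2))) := by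
    refine intervalIntegral.integral_congr fun θ _ => ?_
    have hS := S_pos hc θ
    have hS2 : Real.sqrt (c^2 - Real.sin θ^2) ^ 2 = c^2 - Real.sin θ^2 :=
      Real.sq_sqrt (key_pos hc θ).le
    have hcos : Real.cos θ ^ 2 = 1 - Real.sin θ ^ 2 := Real.cos_sq' θ
    field_simp
    nlinarith [hS2, hcos]
  rw [eel_eq hc, kel_eq hc, h1, intervalIntegral.integral_sub,
    intervalIntegral.integral_const_mul, intervalIntegral.integral_const_mul]
  · set A := ∫ θ in (0:ℝ)..(π/2), Real.sqrt (c^2 - Real.sin θ^2) / c with hA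
    set B := ∫ θ in (0:ℝ)..(π/2), c / Real.sqrt (c^2 - Real.sin θ^2) with hB
    field_simp
  · exact (continuous_const.mul (S_cont.div_const c)).intervalIntegrable _ _
  · exact (continuous_const.mul (cont_div hc _ continuous_const)).intervalIntegrable _ _

lemma EK_eq {c : ℝ} (hc : 1 < c) :
    Eel (1/c) - Kel (1/c) =
      ∫ θ in (0:ℝ)..(π/2), -(Real.sin θ^2) / (c * Real.sqrt (c^2 - Real.sin θ^2)) := by
  have hc0 : (0:ℝ) < c := lt_trans one_pos hc
  rw [eel_eq hc, kel_eq hc, ← intervalIntegral.integral_sub]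
  · refine intervalIntegral.integral_congr fun θ _ => ?_
    have hS := S_pos hc θ
    have hS2 : Real.sqrt (c^2 - Real.sin θ^2) ^ 2 = c^2 - Real.sin θ^2 :=
      Real.sq_sqrt (key_pos hc θ).le
    field_simp
    nlinarith [hS2]
  · exact ((S_cont.div_const c)).intervalIntegrable _ _
  · exact (cont_div hc _ continuous_const).intervalIntegrable _ _

lemma hasDeriv_pt {x θ : ℝ} (hx : 1 < x) :
    HasDerivAt (fun y : ℝ => Real.cos θ^2 / Real.sqrt (y^2 - Real.sin θ^2))
      (-(x * Real.cos θ^2) / (Real.sqrt (x^2 - Real.sin θ^2))^3) x := by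
  have hu : HasDerivAt (fun y : ℝ => y^2 - Real.sin θ^2) (2*x) x := by
    simpa using (hasDerivAt_pow 2 x).sub_const (Real.sin θ^2)
  have hS : HasDerivAt (fun y : ℝ => Real.sqrt (y^2 - Real.sin θ^2))
      (2*x / (2 * Real.sqrt (x^2 - Real.sin θ^2))) x := hu.sqrt (key_pos hx θ).ne'
  have h := (hasDerivAt_const x (Real.cos θ^2)).fun_div hS (S_pos hx θ).ne'
  refine h.congr_deriv (Eq.symm ?_)
  have hSne := (S_pos hx θ).ne'
  field_simp
  ring

lemma hasDeriv_F {c : ℝ} (hc : 1 < c) :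
    HasDerivAt (fun x : ℝ => ∫ θ in (0:ℝ)..(π/2), Real.cos θ^2 / Real.sqrt (x^2 - Real.sin θ^2))
      (∫ θ in (0:ℝ)..(π/2), -(c * Real.cos θ^2) / (Real.sqrt (c^2 - Real.sin θ^2))^3) c := by
  have hc0 : (0:ℝ) < c := lt_trans one_pos hc
  have hε : (0:ℝ) < (c-1)/2 := by linarith
  have hm : (0:ℝ) < ((c+1)/2)^2 - 1 := by nlinarith
  have hballx : ∀ x ∈ Metric.ball c ((c-1)/2), 1 < x ∧ x ≤ (3*c-1)/2 ∧ (c+1)/2 < x := by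
    intro x hx
    rw [Metric.mem_ball, Real.dist_eq, abs_lt] at hx
    refine ⟨by nlinarith [hx.1, hx.2], by nlinarith [hx.1, hx.2], by nlinarith [hx.1, hx.2]⟩
  refine (intervalIntegral.hasDerivAt_integral_of_dominated_loc_of_deriv_le
    (F := fun x θ => Real.cos θ^2 / Real.sqrt (x^2 - Real.sin θ^2))
    (F' := fun x θ => -(x * Real.cos θ^2) / (Real.sqrt (x^2 - Real.sin θ^2))^3)
    (bound := fun _ => ((3*c-1)/2) / (Real.sqrt (((c+1)/2)^2 - 1))^3) (Metric.ball_mem_nhds c hε) ?_ ?_ ?_ ?_ ?_ ?_).2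
  · refine Eventually.of_forall fun x => Measurable.aestronglyMeasurable ?_
    exact ((Real.continuous_cos.pow 2).measurable).div
      ((continuous_const.sub (Real.continuous_sin.pow 2)).sqrt.measurable)
  · exact (cont_div hc _ (Real.continuous_cos.pow 2)).intervalIntegrable _ _
  · refine Measurable.aestronglyMeasurable ?_
    exact ((continuous_const.mul (Real.continuous_cos.pow 2)).neg.measurable).div
      (((continuous_const.sub (Real.continuous_sin.pow 2)).sqrt.pow 3).measurable)
  · refine ae_of_all _ fun t _ x hx => ?_
    obtain ⟨hx1, hx2, hx3⟩ := hballx x hx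
    have hx0 : (0:ℝ) < x := lt_trans one_pos hx1
    have hSx := S_pos hx1 t
    have hmx : ((c+1)/2)^2 - 1 ≤ x^2 - Real.sin t^2 := by
      have : ((c+1)/2)^2 ≤ x^2 := by nlinarith
      nlinarith [Real.sin_sq_le_one t]
    have hsqrt : Real.sqrt (((c+1)/2)^2 - 1) ≤ Real.sqrt (x^2 - Real.sin t^2) :=
      Real.sqrt_le_sqrt hmx
    have hsm : (0:ℝ) < Real.sqrt (((c+1)/2)^2 - 1) := Real.sqrt_pos.2 hm
    have hcube : (Real.sqrt (((c+1)/2)^2 - 1))^3 ≤ (Real.sqrt (x^2 - Real.sin t^2))^3 := by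
      gcongr
    rw [Real.norm_eq_abs, abs_div, abs_neg, abs_of_nonneg (by positivity),
      abs_of_nonneg (by positivity)]
    refine div_le_div₀ (by linarith) ?_ (by positivity) hcube
    nlinarith [Real.cos_sq_le_one t, hx0.le, hx2]
  · exact intervalIntegrable_const
  · refine ae_of_all _ fun t _ x hx => hasDeriv_pt (hballx x hx).1

lemma phi_deriv {c : ℝ} (hc : 1 < c) (θ : ℝ) :
    HasDerivAt (fun t : ℝ => -(1/c) * (Real.sin t * Real.cos t / Real.sqrt (c^2 - Real.sin t^2)))
      (-(c * Real.cos θ^2) / (Real.sqrt (c^2 - Real.sin θ^2))^3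
        - (-(Real.sin θ^2) / (c * Real.sqrt (c^2 - Real.sin θ^2)))) θ := by
  have hc0 : (0:ℝ) < c := lt_trans one_pos hc
  have hq : HasDerivAt (fun t : ℝ => Real.sin t * Real.cos t)
      (Real.cos θ * Real.cos θ + Real.sin θ * -Real.sin θ) θ :=
    (Real.hasDerivAt_sin θ).mul (Real.hasDerivAt_cos θ)
  have hu : HasDerivAt (fun t : ℝ => c^2 - Real.sin t^2)
      (-(2 * Real.sin θ ^ 1 * Real.cos θ)) θ := by
    have := ((Real.hasDerivAt_sin θ).pow 2).const_sub (c^2)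
    simpa using this
  have hS : HasDerivAt (fun t : ℝ => Real.sqrt (c^2 - Real.sin t^2))
      ((-(2 * Real.sin θ ^ 1 * Real.cos θ)) / (2 * Real.sqrt (c^2 - Real.sin θ^2))) θ :=
    hu.sqrt (key_pos hc θ).ne'
  have hdiv := (hq.fun_div hS (S_pos hc θ).ne').const_mul (-(1/c))
  refine hdiv.congr_deriv (Eq.symm ?_)
  have hS2 : Real.sqrt (c^2 - Real.sin θ^2) ^ 2 = c^2 - Real.sin θ^2 :=
    Real.sq_sqrt (key_pos hc θ).le
  have hSne := (S_pos hc θ).ne'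
  field_simp
  linear_combination ((Real.cos θ)^2) * hS2

lemma deriv_val {c : ℝ} (hc : 1 < c) :
    (∫ θ in (0:ℝ)..(π/2), -(c * Real.cos θ^2) / (Real.sqrt (c^2 - Real.sin θ^2))^3)
      = Eel (1/c) - Kel (1/c) := by
  have hc0 : (0:ℝ) < c := lt_trans one_pos hc
  rw [EK_eq hc]
  have hcont1 : Continuous (fun θ : ℝ =>
      -(c * Real.cos θ^2) / (Real.sqrt (c^2 - Real.sin θ^2))^3) :=
    ((continuous_const.mul (Real.continuous_cos.pow 2)).neg).div (S_cont.pow 3)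
      (fun θ => by have := S_pos hc θ; positivity)
  have hcont2 : Continuous (fun θ : ℝ =>
      -(Real.sin θ^2) / (c * Real.sqrt (c^2 - Real.sin θ^2))) :=
    ((Real.continuous_sin.pow 2).neg).div (continuous_const.mul S_cont)
      (fun θ => by have := S_pos hc θ; positivity)
  have key := intervalIntegral.integral_eq_sub_of_hasDerivAt
    (a := (0:ℝ)) (b := π/2)
    (f := fun t : ℝ => -(1/c) * (Real.sin t * Real.cos t / Real.sqrt (c^2 - Real.sin t^2)))
    (fun θ _ => phi_deriv hc θ) ((hcont1.sub hcont2).intervalIntegrable _ _)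
  rw [intervalIntegral.integral_sub (hcont1.intervalIntegrable _ _)
    (hcont2.intervalIntegrable _ _)] at key
  simp only [Real.cos_pi_div_two, Real.sin_zero, mul_zero, zero_mul, zero_div,
    sub_zero, sub_self, mul_zero] at key
  linarith [key]

lemma main_deriv {c : ℝ} (hc : 1 < c) :
    HasDerivAt (fun c : ℝ => c * (Eel (1/c) - (1 - 1/c^2) * Kel (1/c)))
      (Eel (1/c) - Kel (1/c)) c := by
  have h1 := hasDeriv_F hc
  rw [deriv_val hc] at h1
  refine h1.congr_of_eventuallyEq ?_
  filter_upwards [Ioi_mem_nhds hc] with x hx using f_eq hx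

lemma EK_neg {c : ℝ} (hc : 1 < c) : Eel (1/c) - Kel (1/c) < 0 := by
  have hc0 : (0:ℝ) < c := lt_trans one_pos hc
  rw [EK_eq hc]
  have hrw : (∫ θ in (0:ℝ)..(π/2), -(Real.sin θ^2) / (c * Real.sqrt (c^2 - Real.sin θ^2)))
      = -∫ θ in (0:ℝ)..(π/2), Real.sin θ^2 / (c * Real.sqrt (c^2 - Real.sin θ^2)) := by
    rw [← intervalIntegral.integral_neg]
    exact intervalIntegral.integral_congr fun θ _ => by ring
  rw [hrw, neg_lt, neg_zero]
  refine intervalIntegral.intervalIntegral_pos_of_pos_on ?_ ?_ (by positivity)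
  · exact ((Real.continuous_sin.pow 2).div (continuous_const.mul S_cont)
      (fun θ => mul_ne_zero hc0.ne' (S_pos hc θ).ne')).intervalIntegrable _ _
  · intro x hx
    have hs : 0 < Real.sin x := Real.sin_pos_of_pos_of_lt_pi hx.1
      (lt_trans hx.2 (by linarith [Real.pi_pos]))
    have := S_pos hc x
    positivity

theorem deriv_L :
    (∀ c : ℝ, 1 < c →
      HasDerivAt (fun c : ℝ => c * (Eel (1/c) - (1 - 1/c^2) * Kel (1/c)))
        (Eel (1/c) - Kel (1/c)) c) ∧
    StrictAntiOn (fun c : ℝ => c * (Eel (1/c) - (1 - 1/c^2) * Kel (1/c)))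
      (Set.Ioi 1) := by
  refine ⟨fun c hc => main_deriv hc, ?_⟩
  refine strictAntiOn_of_deriv_neg (convex_Ioi 1)
    (fun x hx => (main_deriv hx).continuousAt.continuousWithinAt) ?_
  intro x hx
  rw [interior_Ioi] at hx
  rw [(main_deriv hx).deriv]
  exact EK_neg hx
end

section
/- There exists c₀ > 1 such that for all 1 < c < c₀ there is a unique y = y(c) > 0 solving the balancing equation (y + ε)E(y/(y+ε)) = c[E(1/c) - (1-1/c²)K(1/c)], where ε = c - 1; moreover y(c) → 1 as c → 1⁺. -/
open Real MeasureTheory Set Filter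

/-- auxiliary integral -/
noncomputable def Gb (ε y : ℝ) : ℝ :=
  ∫ θ in (0:ℝ)..(π/2), Real.sqrt ((y+ε)^2 - y^2 * Real.sin θ ^ 2)

lemma sqrt_subadd {a b : ℝ} (ha : 0 ≤ a) (hb : 0 ≤ b) :
    Real.sqrt (a + b) ≤ Real.sqrt a + Real.sqrt b := by
  rw [Real.sqrt_le_iff]
  constructor
  · positivity
  · nlinarith [Real.sq_sqrt ha, Real.sq_sqrt hb, Real.sqrt_nonneg a, Real.sqrt_nonneg b]

lemma Gb_integrand_cont (ε y : ℝ) :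
    Continuous fun θ : ℝ => Real.sqrt ((y+ε)^2 - y^2 * Real.sin θ ^ 2) := by
  fun_prop

lemma Gb_eq (ε y : ℝ) (hyε : 0 < y + ε) :
    (y + ε) * Eel (y / (y + ε)) = Gb ε y := by
  unfold Eel Gb
  rw [← intervalIntegral.integral_const_mul]
  apply intervalIntegral.integral_congr
  intro θ _
  dsimp only
  rw [show (y+ε) = Real.sqrt ((y+ε)^2) from (Real.sqrt_sq hyε.le).symm,
    ← Real.sqrt_mul (by positivity)]
  congr 1
  have h : y + ε ≠ 0 := hyε.ne'
  field_simp
  rw [Real.sq_sqrt (sq_nonneg _)]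

lemma Gb_cont : Continuous fun p : ℝ × ℝ => Gb p.1 p.2 := by
  apply intervalIntegral.continuous_parametric_intervalIntegral_of_continuous'
    (f := fun p : ℝ × ℝ => fun θ : ℝ => Real.sqrt ((p.2+p.1)^2 - p.2^2 * Real.sin θ ^ 2))
  fun_prop

lemma Gb_strictMonoOn {ε : ℝ} (hε : 0 < ε) : StrictMonoOn (Gb ε) (Ici 0) := by
  intro y₁ h1 y₂ h2 h12
  simp only [mem_Ici] at h1 h2
  rw [show Gb ε y₂ = Gb ε y₁ + (Gb ε y₂ - Gb ε y₁) by ring]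
  have hint : ∀ y : ℝ, IntervalIntegrable
      (fun θ : ℝ => Real.sqrt ((y+ε)^2 - y^2 * Real.sin θ ^ 2)) volume 0 (π/2) :=
    fun y => (Gb_integrand_cont ε y).intervalIntegrable _ _
  have : 0 < Gb ε y₂ - Gb ε y₁ := by
    unfold Gb
    rw [← intervalIntegral.integral_sub (hint y₂) (hint y₁)]
    apply intervalIntegral.intervalIntegral_pos_of_pos_on
      (((Gb_integrand_cont ε y₂).sub (Gb_integrand_cont ε y₁)).intervalIntegrable _ _)
    · intro θ _
      have hs := Real.sin_sq_le_one θ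
      have h1' : (0:ℝ) ≤ (y₁+ε)^2 - y₁^2 * Real.sin θ ^ 2 := by nlinarith
      have hy2 : y₁^2 ≤ y₂^2 := by nlinarith
      have hlt : (y₁+ε)^2 - y₁^2 * Real.sin θ ^ 2 < (y₂+ε)^2 - y₂^2 * Real.sin θ ^ 2 := by
        nlinarith [mul_le_mul_of_nonneg_left hs (sub_nonneg.mpr hy2),
          mul_pos hε (sub_pos.mpr h12)]
      have := Real.sqrt_lt_sqrt h1' hlt
      simp only [Pi.sub_apply]
      linarith
    · positivity
  linarith

lemma Gb_ge {ε y : ℝ} (hε : 0 ≤ ε) (hy : 0 ≤ y) : y ≤ Gb ε y := by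
  have h : y = ∫ θ in (0:ℝ)..(π/2), y * Real.cos θ := by
    rw [intervalIntegral.integral_const_mul, integral_cos]
    simp
  unfold Gb
  nth_rewrite 1 [h]
  apply intervalIntegral.integral_mono_on (by positivity)
    ((continuous_const.mul Real.continuous_cos).intervalIntegrable _ _)
    ((Gb_integrand_cont ε y).intervalIntegrable _ _)
  intro θ hθ
  have hc : 0 ≤ Real.cos θ := Real.cos_nonneg_of_mem_Icc ⟨by linarith [hθ.1, pi_pos.le], hθ.2⟩
  have hsc := Real.sin_sq_add_cos_sq θ
  have : y * Real.cos θ = Real.sqrt ((y * Real.cos θ)^2) := (Real.sqrt_sq (by positivity)).symm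
  show y * Real.cos θ ≤ _
  rw [this]
  apply Real.sqrt_le_sqrt
  nlinarith [Real.sin_sq_le_one θ]

lemma Gb_le {ε y : ℝ} (hε : 0 ≤ ε) (hy : 0 ≤ y) :
    Gb ε y ≤ y + (π/2) * Real.sqrt (2*y*ε + ε^2) := by
  have h : y + (π/2) * Real.sqrt (2*y*ε + ε^2)
      = ∫ θ in (0:ℝ)..(π/2), (y * Real.cos θ + Real.sqrt (2*y*ε + ε^2)) := by
    rw [intervalIntegral.integral_add (f := fun θ : ℝ => y * Real.cos θ) ((continuous_const.mul Real.continuous_cos).intervalIntegrable _ _)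
      (intervalIntegrable_const), intervalIntegral.integral_const_mul, integral_cos,
      intervalIntegral.integral_const]
    simp [mul_comm]
  rw [h]
  unfold Gb
  apply intervalIntegral.integral_mono_on (by positivity)
    ((Gb_integrand_cont ε y).intervalIntegrable _ _)
    (((continuous_const.mul Real.continuous_cos).add continuous_const : Continuous fun θ : ℝ => y * Real.cos θ + Real.sqrt (2*y*ε + ε^2)).intervalIntegrable _ _)
  intro θ hθ
  have hc : 0 ≤ Real.cos θ := Real.cos_nonneg_of_mem_Icc ⟨by linarith [hθ.1, pi_pos.le], hθ.2⟩
  have hsc := Real.sin_sq_add_cos_sq θ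
  have harg : (y+ε)^2 - y^2 * Real.sin θ ^ 2 = (y * Real.cos θ)^2 + (2*y*ε + ε^2) := by
    nlinarith
  rw [harg]
  calc Real.sqrt ((y * Real.cos θ)^2 + (2*y*ε + ε^2))
      ≤ Real.sqrt ((y * Real.cos θ)^2) + Real.sqrt (2*y*ε + ε^2) :=
        sqrt_subadd (by positivity) (by positivity)
    _ = y * Real.cos θ + Real.sqrt (2*y*ε + ε^2) := by
        rw [Real.sqrt_sq (by positivity)]

lemma Gb_zero {ε : ℝ} (hε : 0 ≤ ε) : Gb ε 0 = ε * (π/2) := by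
  unfold Gb
  have : ∀ θ ∈ Set.uIcc (0:ℝ) (π/2), Real.sqrt ((0+ε)^2 - 0^2 * Real.sin θ ^ 2) = ε := by
    intro θ _
    rw [show (0+ε)^2 - 0^2 * Real.sin θ ^ 2 = ε^2 by ring, Real.sqrt_sq hε]
  rw [intervalIntegral.integral_congr this, intervalIntegral.integral_const]
  simp [smul_eq_mul]
  ring

lemma exists_sol {ε : ℝ} (hε : 0 < ε) {R : ℝ} (hR : ε * (π/2) < R) :
    ∃ x : ℝ, 0 < x ∧ Gb ε x = R ∧ ∀ x' : ℝ, 0 < x' → Gb ε x' = R → x' = x := by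
  have hR0 : 0 < R := lt_trans (by positivity) hR
  have hcont : ContinuousOn (Gb ε) (Icc 0 R) :=
    (Gb_cont.comp (continuous_const.prodMk continuous_id)).continuousOn
  have h0 : Gb ε 0 < R := by rw [Gb_zero hε.le]; exact hR
  have hRge : R ≤ Gb ε R := Gb_ge hε.le hR0.le
  have : R ∈ Icc (Gb ε 0) (Gb ε R) := ⟨h0.le, hRge⟩
  obtain ⟨x, hx, hGx⟩ := intermediate_value_Icc hR0.le hcont this
  have hx0 : 0 < x := by
    rcases eq_or_lt_of_le hx.1 with h | h
    · exfalso; rw [← h] at hGx; rw [hGx] at h0; exact lt_irrefl _ h0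
    · exact h
  refine ⟨x, hx0, hGx, fun x' hx' hGx' => ?_⟩
  exact (Gb_strictMonoOn hε).injOn (mem_Ici.mpr hx'.le) (mem_Ici.mpr hx0.le) (hGx'.trans hGx.symm)

lemma Eel_cont : Continuous Eel := by
  apply intervalIntegral.continuous_parametric_intervalIntegral_of_continuous'
    (f := fun k : ℝ => fun θ : ℝ => Real.sqrt (1 - k^2 * Real.sin θ ^ 2))
  fun_prop

lemma Eel_one : Eel 1 = 1 := by
  unfold Eel
  have : ∀ θ ∈ Set.uIcc (0:ℝ) (π/2),
      Real.sqrt (1 - (1:ℝ)^2 * Real.sin θ ^ 2) = Real.cos θ := by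
    intro θ hθ
    rw [Set.uIcc_of_le (by positivity)] at hθ
    have hc : 0 ≤ Real.cos θ := Real.cos_nonneg_of_mem_Icc ⟨by linarith [hθ.1, pi_pos.le], hθ.2⟩
    rw [show 1 - (1:ℝ)^2 * Real.sin θ ^ 2 = Real.cos θ ^ 2 by
      nlinarith [Real.sin_sq_add_cos_sq θ], Real.sqrt_sq hc]
  rw [intervalIntegral.integral_congr this, integral_cos]
  simp

lemma Kel_nonneg (k : ℝ) : 0 ≤ Kel k := by
  unfold Kel
  apply intervalIntegral.integral_nonneg (by positivity)
  intro θ _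
  positivity

lemma Kel_le {k : ℝ} (hk : k^2 < 1) : Kel k ≤ (π/2) * (1 / Real.sqrt (1 - k^2)) := by
  have hpos : ∀ θ : ℝ, 0 < 1 - k^2 * Real.sin θ ^ 2 := by
    intro θ
    nlinarith [Real.sin_sq_le_one θ, sq_nonneg k, Real.sin_sq_le_one θ]
  have hcont : Continuous fun θ : ℝ => 1 / Real.sqrt (1 - k^2 * Real.sin θ ^ 2) := by
    apply continuous_const.div (by fun_prop)
    intro θ
    exact (Real.sqrt_pos.mpr (hpos θ)).ne'
  unfold Kel
  have h : (π/2) * (1 / Real.sqrt (1 - k^2))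
      = ∫ θ in (0:ℝ)..(π/2), 1 / Real.sqrt (1 - k^2) := by
    rw [intervalIntegral.integral_const]
    simp [smul_eq_mul]
  rw [h]
  apply intervalIntegral.integral_mono_on (by positivity)
    (hcont.intervalIntegrable _ _) (intervalIntegrable_const)
  intro θ _
  apply one_div_le_one_div_of_le (Real.sqrt_pos.mpr (by linarith))
  apply Real.sqrt_le_sqrt
  nlinarith [Real.sin_sq_le_one θ, sq_nonneg k]

lemma tendsto_R : Tendsto (fun c : ℝ => c * (Eel (1/c) - (1 - 1/c^2) * Kel (1/c)))
    (nhdsWithin 1 (Set.Ioi 1)) (nhds 1) := by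
  have hc : Tendsto (fun c : ℝ => c) (nhdsWithin 1 (Set.Ioi 1)) (nhds 1) :=
    (continuous_id.tendsto 1).mono_left nhdsWithin_le_nhds
  have hinv : Tendsto (fun c : ℝ => 1/c) (nhdsWithin 1 (Set.Ioi 1)) (nhds 1) := by
    have : ContinuousAt (fun c : ℝ => 1/c) 1 := ContinuousAt.div continuousAt_const continuousAt_id one_ne_zero
    simpa using this.tendsto.mono_left nhdsWithin_le_nhds
  have hE : Tendsto (fun c : ℝ => Eel (1/c)) (nhdsWithin 1 (Set.Ioi 1)) (nhds 1) := by
    have := (Eel_cont.tendsto 1).comp hinv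
    rwa [Eel_one] at this
  have hT : Tendsto (fun c : ℝ => (1 - 1/c^2) * Kel (1/c)) (nhdsWithin 1 (Set.Ioi 1)) (nhds 0) := by
    apply squeeze_zero' (g := fun c : ℝ => (π/2) * Real.sqrt (1 - 1/c^2))
    · filter_upwards [self_mem_nhdsWithin] with c hc1
      rw [Set.mem_Ioi] at hc1
      have : (1:ℝ)/c^2 < 1 := by
        rw [div_lt_one (by positivity)]; nlinarith
      exact mul_nonneg (by linarith) (Kel_nonneg _)
    · filter_upwards [self_mem_nhdsWithin] with c hc1
      rw [Set.mem_Ioi] at hc1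
      have hc0 : (0:ℝ) < c := by linarith
      have hk : (1/c)^2 < 1 := by
        rw [div_pow, one_pow, div_lt_one (by positivity)]; nlinarith
      have h1 : (0:ℝ) < 1 - (1/c)^2 := by linarith
      calc (1 - 1/c^2) * Kel (1/c) ≤ (1 - 1/c^2) * ((π/2) * (1 / Real.sqrt (1 - (1/c)^2))) := by
            apply mul_le_mul_of_nonneg_left (Kel_le hk)
            rw [div_pow, one_pow] at h1; linarith
        _ = (π/2) * ((1 - (1/c)^2) / Real.sqrt (1 - (1/c)^2)) := by
            rw [div_pow, one_pow]; ring
        _ = (π/2) * Real.sqrt (1 - 1/c^2) := by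
            rw [Real.div_sqrt, div_pow, one_pow]
    · have : ContinuousAt (fun c : ℝ => (π/2) * Real.sqrt (1 - 1/c^2)) 1 := by
        apply ContinuousAt.mul continuousAt_const
        apply Real.continuous_sqrt.continuousAt.comp
        exact ContinuousAt.sub continuousAt_const
          (ContinuousAt.div continuousAt_const (by fun_prop) (by norm_num))
      have h : Tendsto (fun c : ℝ => (π/2) * Real.sqrt (1 - 1/c^2)) (nhdsWithin 1 (Set.Ioi 1))
          (nhds ((π/2) * Real.sqrt (1 - 1/(1:ℝ)^2))) :=
        this.tendsto.mono_left nhdsWithin_le_nhds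
      have hval : (π/2) * Real.sqrt (1 - 1/(1:ℝ)^2) = 0 := by norm_num
      rwa [hval] at h
  have h := hc.mul (hE.sub hT)
  have hval : (1:ℝ) * (1 - 0) = 1 := by norm_num
  rwa [hval] at h

noncomputable def ysol (c : ℝ) : ℝ :=
  if h : 1 < c ∧ (c - 1) * (π/2) < c * (Eel (1/c) - (1 - 1/c^2) * Kel (1/c)) then
    (exists_sol (show (0:ℝ) < c - 1 by linarith [h.1]) h.2).choose
  else 1

lemma ysol_spec {c : ℝ} (h1 : 1 < c)
    (h2 : (c - 1) * (π/2) < c * (Eel (1/c) - (1 - 1/c^2) * Kel (1/c))) :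
    0 < ysol c ∧ Gb (c-1) (ysol c) = c * (Eel (1/c) - (1 - 1/c^2) * Kel (1/c)) ∧
      ∀ x' : ℝ, 0 < x' → Gb (c-1) x' = c * (Eel (1/c) - (1 - 1/c^2) * Kel (1/c)) → x' = ysol c := by
  rw [ysol, dif_pos ⟨h1, h2⟩]
  exact (exists_sol (show (0:ℝ) < c - 1 by linarith) h2).choose_spec

theorem balancing_equation_solution :
    ∃ c₀ : ℝ, 1 < c₀ ∧ ∃ y : ℝ → ℝ,
      (∀ c : ℝ, 1 < c → c < c₀ →
        (0 < y c ∧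
          (y c + (c - 1)) * Eel (y c / (y c + (c - 1)))
            = c * (Eel (1/c) - (1 - 1/c^2) * Kel (1/c)) ∧
          ∀ y' : ℝ, 0 < y' →
            (y' + (c - 1)) * Eel (y' / (y' + (c - 1)))
              = c * (Eel (1/c) - (1 - 1/c^2) * Kel (1/c)) → y' = y c)) ∧
      Tendsto y (nhdsWithin 1 (Set.Ioi 1)) (nhds 1) := by
  have hRt : Tendsto (fun c : ℝ => c * (Eel (1/c) - (1 - 1/c^2) * Kel (1/c)))
      (nhdsWithin 1 (Set.Ioi 1)) (nhds 1) := tendsto_R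
  have hev : ∀ᶠ c in nhdsWithin 1 (Set.Ioi 1),
      (c - 1) * (π/2) < c * (Eel (1/c) - (1 - 1/c^2) * Kel (1/c)) := by
    have hlin : Tendsto (fun c : ℝ => (c - 1) * (π/2)) (nhdsWithin 1 (Set.Ioi 1))
        (nhds (((1:ℝ) - 1) * (π/2))) :=
      (ContinuousAt.mul (by fun_prop) continuousAt_const).tendsto.mono_left nhdsWithin_le_nhds
    have h1 : Tendsto (fun c : ℝ => c * (Eel (1/c) - (1 - 1/c^2) * Kel (1/c)) - (c - 1) * (π/2))
        (nhdsWithin 1 (Set.Ioi 1)) (nhds (1 - ((1:ℝ) - 1) * (π/2))) := hRt.sub hlin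
    have h2 := h1.eventually (eventually_gt_nhds (show (0:ℝ) < 1 - ((1:ℝ) - 1) * (π/2) by norm_num))
    filter_upwards [h2] with c hc
    linarith
  obtain ⟨c₀, hc₀, hIoo⟩ := (nhdsGT_basis (1:ℝ)).eventually_iff.mp hev
  refine ⟨c₀, hc₀, ysol, fun c h1 h2 => ?_, ?_⟩
  · have hP := hIoo (Set.mem_Ioo.mpr ⟨h1, h2⟩)
    obtain ⟨hpos, heq, huniq⟩ := ysol_spec h1 hP
    have hε : (0:ℝ) < c - 1 := by linarith
    refine ⟨hpos, ?_, ?_⟩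
    · rw [Gb_eq (c-1) (ysol c) (by linarith)]
      exact heq
    · intro y' hy' heq'
      apply huniq y' hy'
      rw [← Gb_eq (c-1) y' (by linarith)]
      exact heq'
  · rw [Metric.tendsto_nhds]
    intro δ hδ
    set d : ℝ := min δ (1/2) with hd_def
    have hd : 0 < d := lt_min hδ (by norm_num)
    have hd2 : d ≤ 1/2 := min_le_right _ _
    have hdδ : d ≤ δ := min_le_left _ _
    have E1 : ∀ᶠ c in nhdsWithin 1 (Set.Ioi 1), c ∈ Set.Ioo 1 c₀ :=
      Ioo_mem_nhdsGT_of_mem ⟨le_refl 1, hc₀⟩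
    have E2 : ∀ᶠ c in nhdsWithin 1 (Set.Ioi 1),
        c * (Eel (1/c) - (1 - 1/c^2) * Kel (1/c)) < 1 + d :=
      hRt.eventually (eventually_lt_nhds (by linarith : (1:ℝ) < 1 + d))
    have E3 : ∀ᶠ c in nhdsWithin 1 (Set.Ioi 1),
        (1 - d) + (π/2) * Real.sqrt (2*(1-d)*(c-1) + (c-1)^2)
          < c * (Eel (1/c) - (1 - 1/c^2) * Kel (1/c)) := by
      have hsq : Tendsto (fun c : ℝ => (1 - d) + (π/2) * Real.sqrt (2*(1-d)*(c-1) + (c-1)^2))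
          (nhdsWithin 1 (Set.Ioi 1))
          (nhds ((1 - d) + (π/2) * Real.sqrt (2*(1-d)*((1:ℝ)-1) + ((1:ℝ)-1)^2))) := by
        refine (ContinuousAt.tendsto ?_).mono_left nhdsWithin_le_nhds
        exact ContinuousAt.add continuousAt_const (ContinuousAt.mul continuousAt_const
          (Real.continuous_sqrt.continuousAt.comp (by fun_prop)))
      have hval : (1 - d) + (π/2) * Real.sqrt (2*(1-d)*((1:ℝ)-1) + ((1:ℝ)-1)^2) = 1 - d := by
        norm_num
      rw [hval] at hsq
      have hdiff := hRt.sub hsq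
      have h2 := hdiff.eventually (eventually_gt_nhds (show (0:ℝ) < 1 - (1 - d) by linarith))
      filter_upwards [h2] with c hc
      linarith
    filter_upwards [E1, E2, E3] with c hc1 hc2 hc3
    have h1 : 1 < c := hc1.1
    have hε : (0:ℝ) < c - 1 := by linarith
    have hP := hIoo hc1
    obtain ⟨hpos, heq, _⟩ := ysol_spec h1 hP
    have hub : ysol c < 1 + d := by
      by_contra hcon
      push_neg at hcon
      have hmono := (Gb_strictMonoOn hε).monotoneOn (Set.mem_Ici.mpr (by linarith : (0:ℝ) ≤ 1 + d))
        (Set.mem_Ici.mpr hpos.le) hcon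
      have hge := Gb_ge hε.le (show (0:ℝ) ≤ 1 + d by linarith)
      rw [heq] at hmono
      linarith
    have hlb : 1 - d < ysol c := by
      by_contra hcon
      push_neg at hcon
      have hmono := (Gb_strictMonoOn hε).monotoneOn (Set.mem_Ici.mpr hpos.le)
        (Set.mem_Ici.mpr (by linarith : (0:ℝ) ≤ 1 - d)) hcon
      have hle := Gb_le hε.le (show (0:ℝ) ≤ 1 - d by linarith)
      rw [heq] at hmono
      linarith
    rw [Real.dist_eq, abs_lt]
    constructor <;> linarith
end

section
/- Define W_nod(c) = 2π(1+c)E(2√c/(1+c)) for c > 1. Then W_nod is differentiable with dW_nod/dc = 2πE(1/c), and lim_{c→1⁺} W_nod(c) = 4π. -/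
open Real MeasureTheory Set Filter

lemma my_qpos {c θ : ℝ} (hc : 1 < c) : 0 < 1 + c^2 + 2*c*Real.cos (2*θ) := by
  nlinarith [Real.neg_one_le_cos (2*θ)]

lemma my_dpos {c θ : ℝ} (hc : 1 < c) : 0 < c + Real.cos (2*θ) := by
  nlinarith [Real.neg_one_le_cos (2*θ)]

lemma my_sub {c : ℝ} (hc : 1 < c) :
    (∫ θ in (0:ℝ)..(π/2), (c + Real.cos (2*θ)) / Real.sqrt (1 + c^2 + 2*c*Real.cos (2*θ)))
      = Eel (1/c) := by
  have hc0 : (0:ℝ) < c := by linarith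
  set u : ℝ → ℝ := fun s => Real.sqrt (1 - Real.sin s ^ 2 / c^2) with hu
  set q : ℝ → ℝ := fun θ => 1 + c^2 + 2*c*Real.cos (2*θ) with hq
  set d : ℝ → ℝ := fun θ => c + Real.cos (2*θ) with hd
  set x : ℝ → ℝ := fun θ => Real.sin (2*θ) / d θ with hX
  set φ : ℝ → ℝ := fun θ => Real.arctan (x θ) with hφdef
  set ψ : ℝ → ℝ := fun θ => 2*θ - φ θ with hψdef
  set φ' : ℝ → ℝ := fun θ => 2*(1 + c*Real.cos (2*θ)) / q θ with hφ'
  set ψ' : ℝ → ℝ := fun θ => 2*c*(d θ) / q θ with hψ'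
  have hqpos : ∀ θ, 0 < q θ := fun θ => my_qpos hc
  have hdpos : ∀ θ, 0 < d θ := fun θ => my_dpos hc
  have hqne : ∀ θ, q θ ≠ 0 := fun θ => (hqpos θ).ne'
  have hdne : ∀ θ, d θ ≠ 0 := fun θ => (hdpos θ).ne'
  have hsqne : ∀ θ, Real.sqrt (q θ) ≠ 0 := fun θ => (Real.sqrt_pos.2 (hqpos θ)).ne'
  have hqd : ∀ θ, q θ = d θ^2 + Real.sin (2*θ)^2 := by
    intro θ; simp only [hq, hd]; nlinarith [Real.sin_sq_add_cos_sq (2*θ)]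
  have h2t : ∀ θ : ℝ, HasDerivAt (fun θ:ℝ => 2*θ) 2 θ := by
    intro θ; simpa using (hasDerivAt_id θ).const_mul 2
  have hsin2 : ∀ θ : ℝ, HasDerivAt (fun θ => Real.sin (2*θ)) (Real.cos (2*θ) * 2) θ := by
    intro θ; exact (Real.hasDerivAt_sin (2*θ)).comp θ (h2t θ)
  have hdD : ∀ θ : ℝ, HasDerivAt d (-Real.sin (2*θ) * 2) θ := by
    intro θ; rw [hd]
    exact ((Real.hasDerivAt_cos (2*θ)).comp θ (h2t θ)).const_add c
  have hx2 : ∀ θ, 1 + x θ^2 = q θ / d θ^2 := by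
    intro θ
    have hxθ : x θ = Real.sin (2*θ) / d θ := rfl
    rw [hxθ, div_pow, hqd θ]
    field_simp [hdne θ]
  -- derivative of φ
  have hφderiv : ∀ θ, HasDerivAt φ (φ' θ) θ := by
    intro θ
    have hx : HasDerivAt x ((Real.cos (2*θ) * 2 * d θ - Real.sin (2*θ) * (-Real.sin (2*θ) * 2)) / d θ^2) θ :=
      (hsin2 θ).div (hdD θ) (hdne θ)
    have h := hx.arctan
    rw [hφdef]
    convert h using 1
    rw [hx2 θ]
    have hnum : Real.cos (2*θ) * 2 * d θ - Real.sin (2*θ) * (-Real.sin (2*θ) * 2)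
        = 2*(1 + c*Real.cos (2*θ)) := by
      simp only [hd]; nlinarith [Real.sin_sq_add_cos_sq (2*θ)]
    rw [hnum]
    show 2*(1 + c*Real.cos (2*θ)) / q θ = _
    field_simp [hqne θ, hdne θ]
  have hsqq : ∀ θ, Real.sqrt (1 + x θ^2) = Real.sqrt (q θ) / d θ := by
    intro θ
    rw [hx2 θ, Real.sqrt_div (hqpos θ).le, Real.sqrt_sq (hdpos θ).le]
  have hcosφ : ∀ θ, Real.cos (φ θ) = d θ / Real.sqrt (q θ) := by
    intro θ
    rw [hφdef]; simp only []
    rw [Real.cos_arctan, hsqq θ, one_div_div]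
  have hsinφ : ∀ θ, Real.sin (φ θ) = Real.sin (2*θ) / Real.sqrt (q θ) := by
    intro θ
    rw [hφdef]; simp only []
    have hxθ : x θ = Real.sin (2*θ) / d θ := rfl
    rw [Real.sin_arctan, hsqq θ, hxθ]
    field_simp
    rw [mul_comm (Real.sin (2*θ)) (d θ), mul_div_mul_left _ _ (hdne θ)]
  have hsinψ : ∀ θ, Real.sin (ψ θ) = c * Real.sin (2*θ) / Real.sqrt (q θ) := by
    intro θ
    rw [hψdef]; simp only []
    rw [Real.sin_sub, hcosφ θ, hsinφ θ]
    field_simp [hsqne θ]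
    simp only [hd]; ring
  have huψ : ∀ θ, u (ψ θ) = d θ / Real.sqrt (q θ) := by
    intro θ
    rw [hu]; simp only []
    rw [hsinψ θ, div_pow, Real.sq_sqrt (hqpos θ).le]
    have harg : 1 - (c * Real.sin (2*θ))^2 / q θ / c^2 = d θ^2 / q θ := by
      field_simp [hqne θ]
      linear_combination (c:ℝ)^2 * (hqd θ) + (c^2 - 1) * (Real.sin_sq_add_cos_sq (2*θ))
    rw [harg, Real.sqrt_div (sq_nonneg _), Real.sqrt_sq (hdpos θ).le]
  have hψderiv : ∀ θ, HasDerivAt ψ (ψ' θ) θ := by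
    intro θ
    rw [hψdef]
    have h := (h2t θ).sub (hφderiv θ)
    refine h.congr_deriv ?_; symm
    have e1 : φ' θ = 2*(1 + c*Real.cos (2*θ)) / q θ := rfl
    have e2 : ψ' θ = 2*c*(d θ) / q θ := rfl
    have e3 : q θ = 1 + c^2 + 2*c*Real.cos (2*θ) := rfl
    have e4 : d θ = c + Real.cos (2*θ) := rfl
    rw [e1, e2, eq_sub_iff_add_eq, ← add_div, div_eq_iff (hqne θ)]
    rw [e3, e4]; ring
  have hsinφφ' : ∀ θ, HasDerivAt (fun t => Real.sin (φ t)) (Real.cos (φ θ) * φ' θ) θ :=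
    fun θ => (Real.hasDerivAt_sin (φ θ)).comp θ (hφderiv θ)
  -- pointwise identity
  have hpt : ∀ θ, (c + Real.cos (2*θ)) / Real.sqrt (1 + c^2 + 2*c*Real.cos (2*θ))
      = (1/2) * (Real.cos (φ θ) * φ' θ) + (1/2) * (ψ' θ * u (ψ θ)) := by
    intro θ
    have : (c + Real.cos (2*θ)) / Real.sqrt (1 + c^2 + 2*c*Real.cos (2*θ)) = d θ / Real.sqrt (q θ) := rfl
    rw [this, hcosφ θ, huψ θ, hφ', hψ']
    have hss : Real.sqrt (q θ) * Real.sqrt (q θ) = q θ := Real.mul_self_sqrt (hqpos θ).le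
    have key : (1 + c*Real.cos (2*θ)) + c * d θ = q θ := by simp only [hq, hd]; ring
    field_simp [hsqne θ, hqne θ]
    ring
  -- continuity facts
  have hdcont : Continuous d := by rw [hd]; fun_prop
  have hqcont : Continuous q := by rw [hq]; fun_prop
  have hφ'cont : Continuous φ' := by
    rw [hφ']; exact Continuous.div (by fun_prop) hqcont hqne
  have hψ'cont : Continuous ψ' := by
    rw [hψ']; exact Continuous.div (continuous_const.mul hdcont) hqcont hqne
  have hxcont : Continuous x := by
    rw [hX]; exact Continuous.div (by fun_prop) hdcont hdne
  have hφcont : Continuous φ := by rw [hφdef]; exact Real.continuous_arctan.comp hxcont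
  have hcosφcont : Continuous fun θ => Real.cos (φ θ) := Real.continuous_cos.comp hφcont
  have hψcont : Continuous ψ := by
    rw [hψdef]; exact (continuous_const.mul continuous_id).sub hφcont
  have hucont : Continuous u := by
    rw [hu]; exact Real.continuous_sqrt.comp (by fun_prop)
  -- endpoint values
  have hφ0 : φ 0 = 0 := by simp [hφdef, hX]
  have hsinpi : Real.sin (2*(π/2)) = 0 := by rw [show 2*(π/2) = π by ring, Real.sin_pi]
  have hφπ : φ (π/2) = 0 := by simp [hφdef, hX, hsinpi]
  have hψ0 : ψ 0 = 0 := by simp [hψdef, hφ0]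
  have hψπ : ψ (π/2) = π := by rw [hψdef]; simp only []; rw [hφπ]; ring
  -- integrability
  have hint1 : IntervalIntegrable (fun θ => Real.cos (φ θ) * φ' θ) volume 0 (π/2) :=
    (hcosφcont.mul hφ'cont).intervalIntegrable _ _
  have hint1' : IntervalIntegrable (fun θ => (1/2) * (Real.cos (φ θ) * φ' θ)) volume 0 (π/2) :=
    (continuous_const.mul (hcosφcont.mul hφ'cont)).intervalIntegrable _ _
  have hint2' : IntervalIntegrable (fun θ => (1/2) * (ψ' θ * u (ψ θ))) volume 0 (π/2) :=
    (continuous_const.mul (hψ'cont.mul (hucont.comp hψcont))).intervalIntegrable _ _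
  have huint : ∀ a b : ℝ, IntervalIntegrable u volume a b := fun a b =>
    hucont.intervalIntegrable a b
  -- main computation
  rw [intervalIntegral.integral_congr (g := fun θ => (1/2) * (Real.cos (φ θ) * φ' θ)
      + (1/2) * (ψ' θ * u (ψ θ))) (fun θ _ => hpt θ)]
  rw [intervalIntegral.integral_add hint1' hint2']
  rw [intervalIntegral.integral_const_mul, intervalIntegral.integral_const_mul]
  have hI1 : ∫ θ in (0:ℝ)..(π/2), Real.cos (φ θ) * φ' θ = 0 := by
    rw [intervalIntegral.integral_eq_sub_of_hasDerivAt (fun t _ => hsinφφ' t) hint1]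
    rw [hφπ, hφ0]; simp
  have hI2 : ∫ θ in (0:ℝ)..(π/2), ψ' θ * u (ψ θ) = ∫ s in (0:ℝ)..π, u s := by
    have h := intervalIntegral.integral_comp_smul_deriv (f := ψ) (f' := ψ') (g := u)
      (a := 0) (b := π/2) (fun t _ => hψderiv t) hψ'cont.continuousOn hucont
    rw [hψ0, hψπ] at h
    rw [← h]
    apply intervalIntegral.integral_congr; intro s _
    simp [smul_eq_mul, Function.comp]
  rw [hI1, hI2]
  have hsplit : ∫ s in (0:ℝ)..π, u s = 2 * ∫ s in (0:ℝ)..(π/2), u s := by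
    have hadj := intervalIntegral.integral_add_adjacent_intervals (huint 0 (π/2)) (huint (π/2) π)
    have hrefl : ∫ s in (π/2:ℝ)..π, u s = ∫ s in (0:ℝ)..(π/2), u s := by
      have h := intervalIntegral.integral_comp_sub_left (a := 0) (b := π/2) u π
      rw [show π - π/2 = π/2 by ring, sub_zero] at h
      rw [← h]
      apply intervalIntegral.integral_congr; intro s _
      rw [hu]; simp only []
      rw [Real.sin_pi_sub]
    rw [← hadj, hrefl]; ring
  have hEel : Eel (1/c) = ∫ s in (0:ℝ)..(π/2), u s := by
    unfold Eel
    apply intervalIntegral.integral_congr; intro s _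
    rw [hu]; simp only []
    congr 1; ring
  rw [hsplit, hEel]; ring

lemma my_deriv {c₀ : ℝ} (hc : 1 < c₀) :
    HasDerivAt (fun c : ℝ => ∫ θ in (0:ℝ)..(π/2), Real.sqrt (1 + c^2 + 2*c*Real.cos (2*θ)))
      (∫ θ in (0:ℝ)..(π/2), (c₀ + Real.cos (2*θ)) / Real.sqrt (1 + c₀^2 + 2*c₀*Real.cos (2*θ)))
      c₀ := by
  set ε := (c₀ - 1)/2 with hε
  have hε_pos : 0 < ε := by rw [hε]; linarith
  have hball : ∀ y ∈ Metric.ball c₀ ε, 1 + ε < y := by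
    intro y hy
    rw [Metric.mem_ball, Real.dist_eq, abs_lt] at hy
    rw [hε]; cases hy with
    | intro h1 h2 => rw [hε] at h1; linarith
  have key := intervalIntegral.hasDerivAt_integral_of_dominated_loc_of_deriv_le
    (F := fun c θ => Real.sqrt (1 + c^2 + 2*c*Real.cos (2*θ)))
    (F' := fun c θ => (c + Real.cos (2*θ)) / Real.sqrt (1 + c^2 + 2*c*Real.cos (2*θ)))
    (x₀ := c₀) (a := 0) (b := π/2) (μ := volume)
    (bound := fun _ => (c₀ + ε + 1) / ε)
    (Metric.ball_mem_nhds c₀ hε_pos)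
    (by
      filter_upwards with y
      exact ((Real.continuous_sqrt.comp (by fun_prop)).aestronglyMeasurable))
    ((Real.continuous_sqrt.comp (by fun_prop)).intervalIntegrable _ _)
    (by
      apply Continuous.aestronglyMeasurable
      apply Continuous.div (by fun_prop) (Real.continuous_sqrt.comp (by fun_prop))
      intro θ
      exact (Real.sqrt_pos.2 (my_qpos hc)).ne')
    (by
      filter_upwards with θ _ y hy
      have hy1 : 1 + ε < y := hball y hy
      have hy2 : y < c₀ + ε := by
        rw [Metric.mem_ball, Real.dist_eq, abs_lt] at hy; linarith [hy.2]
      have hyq : 0 < 1 + y^2 + 2*y*Real.cos (2*θ) := my_qpos (by linarith)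
      have hyd : 0 < y + Real.cos (2*θ) := my_dpos (by linarith)
      have hsq : ε ≤ Real.sqrt (1 + y^2 + 2*y*Real.cos (2*θ)) := by
        have h1 : (y - 1)^2 ≤ 1 + y^2 + 2*y*Real.cos (2*θ) := by
          nlinarith [Real.neg_one_le_cos (2*θ)]
        calc ε ≤ y - 1 := by linarith
        _ = Real.sqrt ((y-1)^2) := (Real.sqrt_sq (by linarith)).symm
        _ ≤ _ := Real.sqrt_le_sqrt h1
      rw [Real.norm_eq_abs, abs_of_nonneg (div_nonneg hyd.le (Real.sqrt_nonneg _))]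
      apply div_le_div₀ (by positivity) _ hε_pos hsq
      have := Real.cos_le_one (2*θ)
      linarith)
    (intervalIntegrable_const)
    (by
      filter_upwards with θ _ y hy
      have hy1 : 1 + ε < y := hball y hy
      have hyq : 0 < 1 + y^2 + 2*y*Real.cos (2*θ) := my_qpos (by linarith)
      have hq : HasDerivAt (fun c : ℝ => 1 + c^2 + 2*c*Real.cos (2*θ))
          (2*y + 2*Real.cos (2*θ)) y := by
        have h1 : HasDerivAt (fun c : ℝ => c^2) (2*y) y := by
          simpa using hasDerivAt_pow 2 y
        have h2 : HasDerivAt (fun c : ℝ => 2*c*Real.cos (2*θ)) (2*Real.cos (2*θ)) y := by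
          have := ((hasDerivAt_id y).const_mul 2).mul_const (Real.cos (2*θ))
          exact this.congr_deriv (by ring)
        exact (h1.const_add 1).add h2
      have h := hq.sqrt hyq.ne'
      refine h.congr_deriv ?_; symm
      rw [div_eq_div_iff (Real.sqrt_pos.2 hyq).ne' (by positivity : (2:ℝ)*Real.sqrt (1 + y^2 + 2*y*Real.cos (2*θ)) ≠ 0)]
      ring)
  exact key.2

lemma my_rep {c : ℝ} (hc : 0 < c) :
    (1 + c) * Eel (2*Real.sqrt c/(1+c)) =
      ∫ θ in (0:ℝ)..(π/2), Real.sqrt (1 + c^2 + 2*c*Real.cos (2*θ)) := by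
  have h1c : (0:ℝ) < 1 + c := by linarith
  unfold Eel
  rw [← intervalIntegral.integral_const_mul]
  apply intervalIntegral.integral_congr; intro θ _
  simp only []
  show (1+c) * Real.sqrt (1 - (2*Real.sqrt c/(1+c))^2 * Real.sin θ^2) = _
  have hx : (1+c) * Real.sqrt (1 - (2*Real.sqrt c/(1+c))^2 * Real.sin θ^2)
      = Real.sqrt ((1+c)^2 * (1 - (2*Real.sqrt c/(1+c))^2 * Real.sin θ^2)) := by
    rw [Real.sqrt_mul (by positivity), Real.sqrt_sq h1c.le]
  rw [hx]
  congr 1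
  have hs : Real.sqrt c ^ 2 = c := Real.sq_sqrt hc.le
  have hcos : Real.cos (2*θ) = 1 - 2*Real.sin θ^2 := by
    rw [Real.cos_two_mul, Real.cos_sq']; ring
  rw [hcos]
  field_simp
  ring_nf
  nlinarith [hs, Real.sin_sq_add_cos_sq θ]

lemma my_g1 : (∫ θ in (0:ℝ)..(π/2), Real.sqrt (1 + (1:ℝ)^2 + 2*1*Real.cos (2*θ))) = 2 := by
  have h : ∀ θ ∈ uIcc (0:ℝ) (π/2), Real.sqrt (1 + (1:ℝ)^2 + 2*1*Real.cos (2*θ))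
      = 2 * Real.cos θ := by
    intro θ hθ
    have h4 : 1 + (1:ℝ)^2 + 2*1*Real.cos (2*θ) = (2*Real.cos θ)^2 := by
      rw [Real.cos_two_mul]; ring
    rw [h4, Real.sqrt_sq]
    have hmem : θ ∈ Icc (0:ℝ) (π/2) := by
      rwa [uIcc_of_le (by positivity)] at hθ
    have hcos := Real.cos_nonneg_of_mem_Icc
      (⟨by linarith [hmem.1, Real.pi_pos], hmem.2⟩ : θ ∈ Icc (-(π/2)) (π/2))
    linarith
  rw [intervalIntegral.integral_congr h, intervalIntegral.integral_const_mul, integral_cos]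
  simp

lemma my_cont : ContinuousAt
    (fun c : ℝ => ∫ θ in (0:ℝ)..(π/2), Real.sqrt (1 + c^2 + 2*c*Real.cos (2*θ))) 1 := by
  apply intervalIntegral.continuousAt_of_dominated_interval (bound := fun _ => 3)
  · filter_upwards with y
    exact (Real.continuous_sqrt.comp (by fun_prop)).aestronglyMeasurable
  · filter_upwards [Metric.ball_mem_nhds (1:ℝ) one_pos] with y hy
    filter_upwards with θ _
    rw [Metric.mem_ball, Real.dist_eq, abs_lt] at hy
    rw [Real.norm_eq_abs, abs_of_nonneg (Real.sqrt_nonneg _)]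
    have h9 : 1 + y^2 + 2*y*Real.cos (2*θ) ≤ 9 := by
      nlinarith [Real.neg_one_le_cos (2*θ), Real.cos_le_one (2*θ)]
    calc Real.sqrt (1 + y^2 + 2*y*Real.cos (2*θ)) ≤ Real.sqrt 9 := Real.sqrt_le_sqrt h9
    _ = 3 := by
        rw [show (9:ℝ) = 3^2 by norm_num, Real.sqrt_sq]; norm_num
  · exact intervalIntegrable_const
  · filter_upwards with θ _
    exact (Real.continuous_sqrt.comp (by fun_prop)).continuousAt

theorem nodoid_willmore_energy :
    (∀ c : ℝ, 1 < c →
      HasDerivAt (fun c : ℝ => 2 * π * (1 + c) * Eel (2 * Real.sqrt c / (1 + c)))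
        (2 * π * Eel (1/c)) c) ∧
    Tendsto (fun c : ℝ => 2 * π * (1 + c) * Eel (2 * Real.sqrt c / (1 + c)))
      (nhdsWithin 1 (Set.Ioi 1)) (nhds (4 * π)) := by
  constructor
  · intro c hc
    have h := my_deriv hc
    rw [my_sub hc] at h
    have h2 := h.const_mul (2*π)
    apply h2.congr_of_eventuallyEq
    filter_upwards [isOpen_Ioi.mem_nhds (show (0:ℝ) < c by linarith)] with y hy
    rw [show 2*π*(1+y)*Eel (2*Real.sqrt y/(1+y)) = 2*π*((1+y)*Eel (2*Real.sqrt y/(1+y))) from by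
      ring, my_rep hy]
  · have ht : Tendsto
        (fun c : ℝ => 2*π * ∫ θ in (0:ℝ)..(π/2), Real.sqrt (1 + c^2 + 2*c*Real.cos (2*θ)))
        (nhdsWithin 1 (Set.Ioi 1)) (nhds (4*π)) := by
      have h : Tendsto
          (fun c : ℝ => (2*π) * ∫ θ in (0:ℝ)..(π/2), Real.sqrt (1 + c^2 + 2*c*Real.cos (2*θ)))
          (nhdsWithin 1 (Set.Ioi 1))
          (nhds ((2*π) * ∫ θ in (0:ℝ)..(π/2), Real.sqrt (1 + (1:ℝ)^2 + 2*1*Real.cos (2*θ)))) :=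
        Tendsto.const_mul _ (my_cont.tendsto.mono_left nhdsWithin_le_nhds)
      rw [my_g1] at h
      have h42 : (4:ℝ)*π = 2*π*2 := by ring
      rw [h42]
      exact h
    apply ht.congr'
    filter_upwards [self_mem_nhdsWithin] with y hy
    have hy0 : (0:ℝ) < y := lt_trans one_pos hy
    rw [show 2*π*(1+y)*Eel (2*Real.sqrt y/(1+y)) = 2*π*((1+y)*Eel (2*Real.sqrt y/(1+y))) from by
      ring, my_rep hy0]
end
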